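/- arXiv:1402.4754 — 4 statements merged into one kernel-verified Lean document; each statement's English description precedes it below -/
import Mathlib

section
/- There exists c ∈ (0,1) such that the following holds for all integers Δ, Δ' ≥ 1 and all non-negative integers ℓ with ℓ ≤ cΔ', Δ' ≤ cΔ and Δ' ≥ 1/c. Let G be a graph with Δ(G) ≤ Δ and e(G) ≥ (ℓ − 1)Δ + Δ'. Then G contains one of the following: (i) a matching M of size ℓ + 1 together with an edge uv of G such that u ∉ V(M); or (ii) ℓ vertices each of degree at least Δ'. Moreover, if ℓ ≥ 1 and e(G) ≥ ℓΔ + 1, or if ℓ = 0 and e(G) ≥ 2, then (i) holds. -/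
/-- The number of neighbours of `v` in the graph `P` (its degree). -/
noncomputable def pdeg {V : Type*} (P : SimpleGraph V) (v : V) : ℕ :=
  {u | P.Adj v u}.ncard

/-- `M` is a matching in the graph `G`: a set of pairwise vertex-disjoint edges of `G`. -/
def IsMatchingIn {V : Type*} (G : SimpleGraph V) (M : Finset (Sym2 V)) : Prop :=
  (↑M ⊆ G.edgeSet) ∧
    (M : Set (Sym2 V)).Pairwise fun e f => ∀ v : V, ¬ (v ∈ e ∧ v ∈ f)

set_option linter.unusedSectionVars false
set_option maxHeartbeats 1000000

section Helpers

variable {α : Type} [Fintype α] [DecidableEq α]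

open Classical in
/-- vertex set of a finset of edges -/
noncomputable def mvert (M : Finset (Sym2 α)) : Finset α :=
  M.biUnion fun e => Finset.univ.filter (· ∈ e)

lemma mem_mvert {M : Finset (Sym2 α)} {v : α} : v ∈ mvert M ↔ ∃ e ∈ M, v ∈ e := by
  classical
  simp [mvert]

lemma card_mvert_le (M : Finset (Sym2 α)) : (mvert M).card ≤ 2 * M.card := by
  classical
  refine le_trans (Finset.card_biUnion_le) ?_
  rw [mul_comm]
  refine le_trans (Finset.sum_le_card_nsmul M _ 2 ?_) (by simp [mul_comm])
  rintro e -
  induction e with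
  | _ a b =>
    refine le_trans (Finset.card_le_card (t := {a, b}) ?_) (Finset.card_insert_le _ _ |>.trans (by simp))
    intro x hx
    simp only [Finset.mem_filter, Sym2.mem_iff] at hx
    simpa using hx.2

lemma pdeg_eq_ncard_neighborSet (G : SimpleGraph α) (v : α) :
    pdeg G v = (G.neighborSet v).ncard := rfl

lemma ncard_incidenceSet (G : SimpleGraph α) (v : α) :
    (G.incidenceSet v).ncard = pdeg G v := by
  rw [pdeg_eq_ncard_neighborSet, ← Nat.card_coe_set_eq, ← Nat.card_coe_set_eq]
  exact Nat.card_congr (G.incidenceSetEquivNeighborSet v)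

/-- covering bound -/
lemma ncard_edgeSet_le_sum (G : SimpleGraph α) (S : Finset α)
    (h : ∀ e ∈ G.edgeSet, ∃ v ∈ S, v ∈ e) :
    G.edgeSet.ncard ≤ ∑ v ∈ S, pdeg G v := by
  classical
  have hfin : G.edgeSet.Finite := Set.toFinite _
  have hsub : hfin.toFinset ⊆ S.biUnion (fun v => (Set.toFinite (G.incidenceSet v)).toFinset) := by
    intro e he
    rw [Set.Finite.mem_toFinset] at he
    obtain ⟨v, hvS, hve⟩ := h e he
    refine Finset.mem_biUnion.2 ⟨v, hvS, ?_⟩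
    rw [Set.Finite.mem_toFinset]
    exact ⟨he, hve⟩
  calc G.edgeSet.ncard = hfin.toFinset.card := (Set.ncard_eq_toFinset_card _ hfin)
    _ ≤ _ := Finset.card_le_card hsub
    _ ≤ ∑ v ∈ S, ((Set.toFinite (G.incidenceSet v)).toFinset).card := Finset.card_biUnion_le
    _ = ∑ v ∈ S, pdeg G v := by
        refine Finset.sum_congr rfl fun v _ => ?_
        rw [← Set.ncard_eq_toFinset_card _ _, ncard_incidenceSet]

/-- goal (i) abbreviation -/
def GoalI (G : SimpleGraph α) (ℓ : ℕ) : Prop :=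
  ∃ M : Finset (Sym2 α), IsMatchingIn G M ∧ M.card = ℓ + 1 ∧
    ∃ u v : α, G.Adj u v ∧ ∀ e ∈ M, u ∉ e

lemma isMatchingIn_mono {G : SimpleGraph α} {M N : Finset (Sym2 α)}
    (hMN : M ⊆ N) (hN : IsMatchingIn G N) : IsMatchingIn G M :=
  ⟨fun e he => hN.1 (by exact_mod_cast hMN (by exact_mod_cast he)),
   hN.2.mono (by exact_mod_cast hMN)⟩

lemma isMatchingIn_empty (G : SimpleGraph α) : IsMatchingIn G (∅ : Finset (Sym2 α)) := by
  constructor <;> simp [IsMatchingIn]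

lemma isMatchingIn_graph_mono {G G' : SimpleGraph α} (h : ∀ x y, G'.Adj x y → G.Adj x y)
    {M : Finset (Sym2 α)} (hM : IsMatchingIn G' M) : IsMatchingIn G M := by
  refine ⟨fun e he => ?_, hM.2⟩
  have h1 := hM.1 he
  induction e with
  | _ x y => exact (SimpleGraph.mem_edgeSet G).2 (h x y ((SimpleGraph.mem_edgeSet G').1 h1))

lemma notMem_mvert_iff {M : Finset (Sym2 α)} {v : α} :
    v ∉ mvert M ↔ ∀ e ∈ M, v ∉ e := by
  rw [mem_mvert]; push_neg; rfl

lemma isMatchingIn_insert {G : SimpleGraph α} {M : Finset (Sym2 α)} {u w : α}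
    (hM : IsMatchingIn G M) (huw : G.Adj u w)
    (hu : ∀ e ∈ M, u ∉ e) (hw : ∀ e ∈ M, w ∉ e) :
    IsMatchingIn G (insert s(u, w) M) ∧ (insert s(u, w) M).card = M.card + 1 := by
  have hnotmem : s(u, w) ∉ M := fun hmem => (hu _ hmem) (by simp)
  constructor
  · constructor
    · intro e he
      rw [Finset.coe_insert, Set.mem_insert_iff] at he
      rcases he with rfl | he
      · exact (SimpleGraph.mem_edgeSet G).2 huw
      · exact hM.1 he
    · rw [Finset.coe_insert]
      refine Set.Pairwise.insert hM.2 ?_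
      intro e he hne
      constructor
      · intro v hv
        rcases hv with ⟨hv1, hv2⟩
        rw [Sym2.mem_iff] at hv1
        rcases hv1 with rfl | rfl
        · exact hu _ he hv2
        · exact hw _ he hv2
      · intro v hv
        rcases hv with ⟨hv1, hv2⟩
        rw [Sym2.mem_iff] at hv2
        rcases hv2 with rfl | rfl
        · exact hu _ he hv1
        · exact hw _ he hv1
  · rw [Finset.card_insert_of_notMem hnotmem]

/-- there is a maximum matching -/
lemma exists_max_matching (G : SimpleGraph α) :
    ∃ M : Finset (Sym2 α), IsMatchingIn G M ∧ ∀ N, IsMatchingIn G N → N.card ≤ M.card := by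
  classical
  obtain ⟨M, hM, hmax⟩ := Finset.exists_max_image
    (Finset.univ.filter fun M : Finset (Sym2 α) => IsMatchingIn G M) Finset.card
    ⟨∅, by simp [isMatchingIn_empty]⟩
  refine ⟨M, (Finset.mem_filter.1 hM).2, fun N hN => hmax N (by simp [hN])⟩

/-- a maximum matching covers every edge -/
lemma max_matching_cover {G : SimpleGraph α} {M : Finset (Sym2 α)}
    (hM : IsMatchingIn G M) (hmax : ∀ N, IsMatchingIn G N → N.card ≤ M.card) :
    ∀ e ∈ G.edgeSet, ∃ v ∈ mvert M, v ∈ e := by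
  intro e he
  by_contra hcon
  push_neg at hcon
  induction e with
  | _ x y =>
    have hadj : G.Adj x y := (SimpleGraph.mem_edgeSet G).1 he
    have hx : ∀ f ∈ M, x ∉ f := fun f hf hxf =>
      hcon x (mem_mvert.2 ⟨f, hf, hxf⟩) (by simp)
    have hy : ∀ f ∈ M, y ∉ f := fun f hf hyf =>
      hcon y (mem_mvert.2 ⟨f, hf, hyf⟩) (by simp)
    obtain ⟨hins, hcard⟩ := isMatchingIn_insert hM hadj hx hy
    have := hmax _ hins
    omega

end Helpers


section Helpers2
variable {α : Type} [Fintype α] [DecidableEq α]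

/-- pick a neighbour avoiding a small finset -/
lemma exists_neighbor_avoid {G : SimpleGraph α} {u : α} {S : Finset α}
    (h : S.card < pdeg G u) : ∃ w, G.Adj u w ∧ w ∉ S := by
  by_contra hcon
  push_neg at hcon
  have hsub : {w | G.Adj u w} ⊆ (S : Set α) := fun w hw => hcon w hw
  have := Set.ncard_le_ncard hsub S.finite_toSet
  rw [Set.ncard_coe_finset] at this
  exact absurd h (by unfold pdeg; omega)

lemma goalI_of_big_matching {G : SimpleGraph α} {K : Finset (Sym2 α)} {ℓ : ℕ}
    (hK : IsMatchingIn G K) (hcard : ℓ + 2 ≤ K.card) : GoalI G ℓ := by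
  obtain ⟨K', hK'sub, hK'card⟩ := Finset.exists_subset_card_eq (n := ℓ + 2) (s := K) hcard
  have hK' : IsMatchingIn G K' := isMatchingIn_mono hK'sub hK
  have hne : K'.Nonempty := Finset.card_pos.1 (by omega)
  obtain ⟨e₀, he₀⟩ := hne
  refine ⟨K'.erase e₀, isMatchingIn_mono (Finset.erase_subset _ _) hK', ?_, ?_⟩
  · rw [Finset.card_erase_of_mem he₀]; omega
  · induction e₀ with
  | _ x y =>
    have hadj : G.Adj x y := (SimpleGraph.mem_edgeSet G).1 (hK'.1 (by exact_mod_cast he₀))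
    refine ⟨x, y, hadj, ?_⟩
    intro e he hxe
    have hne' : e ≠ s(x, y) := Finset.ne_of_mem_erase he
    exact (hK'.2 (by exact_mod_cast Finset.mem_of_mem_erase he) (by exact_mod_cast he₀) hne' x) ⟨hxe, by simp⟩

lemma goalI_zero {G : SimpleGraph α} (hE : 2 ≤ G.edgeSet.ncard) : GoalI G 0 := by
  obtain ⟨e₁, e₂, he₁, he₂, hne⟩ := (Set.one_lt_ncard_iff (s := G.edgeSet) (Set.toFinite _)).1 (by omega)
  have hsingle : IsMatchingIn G {e₁} := by
    constructor
    · intro e he; rw [Finset.coe_singleton, Set.mem_singleton_iff] at he; subst he; exact he₁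
    · rw [Finset.coe_singleton]; exact Set.pairwise_singleton _ _
  induction e₂ with
  | _ u v =>
    have hadj : G.Adj u v := (SimpleGraph.mem_edgeSet G).1 he₂
    by_cases hu : u ∈ e₁
    · by_cases hv : v ∈ e₁
      · exact absurd (Sym2.eq_of_ne_mem hadj.ne hu hv (Sym2.mem_mk_left u v) (Sym2.mem_mk_right u v)) hne
      · refine ⟨{e₁}, hsingle, by simp, v, u, hadj.symm, ?_⟩
        intro e he; rw [Finset.mem_singleton] at he; subst he; exact hv
    · refine ⟨{e₁}, hsingle, by simp, u, v, hadj, ?_⟩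
      intro e he; rw [Finset.mem_singleton] at he; subst he; exact hu


/-- greedily extend a matching through high-degree vertices -/
lemma extend_matching (G : SimpleGraph α) :
    ∀ (H : Finset α) (N : Finset (Sym2 α)), IsMatchingIn G N →
    (∀ v ∈ H, ∀ e ∈ N, v ∉ e) →
    (∀ v ∈ H, 2 * N.card + 2 * H.card < pdeg G v) →
    ∃ N', IsMatchingIn G N' ∧ N ⊆ N' ∧ N'.card = N.card + H.card := by
  intro H
  induction H using Finset.induction_on with
  | empty => intro N hN _ _; exact ⟨N, hN, Finset.Subset.refl _, by simp⟩
  | @insert a s ha ih =>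
    intro N hN hdisj hdeg
    have hacard : (insert a s).card = s.card + 1 := Finset.card_insert_of_notMem ha
    have hdega : (mvert N ∪ insert a s).card < pdeg G a := by
      have h1 : (mvert N ∪ insert a s).card ≤ 2 * N.card + (s.card + 1) := by
        refine le_trans (Finset.card_union_le _ _) ?_
        have := card_mvert_le N
        omega
      have := hdeg a (Finset.mem_insert_self a s)
      omega
    obtain ⟨w, haw, hw⟩ := exists_neighbor_avoid hdega
    rw [Finset.mem_union, not_or] at hw
    obtain ⟨hwN, hwas⟩ := hw
    have hwN' : ∀ e ∈ N, w ∉ e := notMem_mvert_iff.1 hwN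
    have haN : ∀ e ∈ N, a ∉ e := hdisj a (Finset.mem_insert_self a s)
    obtain ⟨hins, hcard⟩ := isMatchingIn_insert hN haw haN hwN'
    have side1 : ∀ v ∈ s, ∀ e ∈ insert s(a, w) N, v ∉ e := by
      intro v hv e he
      rw [Finset.mem_insert] at he
      rcases he with rfl | he
      · rw [Sym2.mem_iff]
        push_neg
        constructor
        · rintro rfl; exact ha hv
        · rintro rfl; exact hwas (Finset.mem_insert_of_mem hv)
      · exact hdisj v (Finset.mem_insert_of_mem hv) e he
    have side2 : ∀ v ∈ s, 2 * (insert s(a, w) N).card + 2 * s.card < pdeg G v := by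
      intro v hv
      have := hdeg v (Finset.mem_insert_of_mem hv)
      omega
    obtain ⟨N', hN', hsub, hcard'⟩ := ih (insert s(a, w) N) hins side1 side2
    exact ⟨N', hN', le_trans (Finset.subset_insert _ _) hsub, by omega⟩

/-- the graph with a set of vertices removed -/
def delV (G : SimpleGraph α) (S : Finset α) : SimpleGraph α where
  Adj x y := G.Adj x y ∧ x ∉ S ∧ y ∉ S
  symm := by constructor; rintro x y ⟨h1, h2, h3⟩; exact ⟨h1.symm, h3, h2⟩
  loopless := by constructor; rintro x ⟨h1, _⟩; exact G.loopless.irrefl x h1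

lemma delV_adj_le {G : SimpleGraph α} {S : Finset α} : ∀ x y, (delV G S).Adj x y → G.Adj x y :=
  fun _ _ h => h.1

lemma pdeg_delV_le {G : SimpleGraph α} {S : Finset α} (v : α) : pdeg (delV G S) v ≤ pdeg G v := by
  refine Set.ncard_le_ncard (fun w hw => hw.1) (Set.toFinite _)

lemma pdeg_delV_of_mem {G : SimpleGraph α} {S : Finset α} {v : α} (hv : v ∈ S) :
    pdeg (delV G S) v = 0 := by
  have : {u | (delV G S).Adj v u} = ∅ := by
    ext u; simp only [Set.mem_setOf_eq, Set.mem_empty_iff_false, iff_false]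
    rintro ⟨_, h2, _⟩; exact h2 hv
  rw [pdeg, this, Set.ncard_empty]

lemma edge_delV_avoid {G : SimpleGraph α} {S : Finset α} {e : Sym2 α}
    (he : e ∈ (delV G S).edgeSet) : ∀ v ∈ e, v ∉ S := by
  induction e with
  | _ x y =>
    have h := (SimpleGraph.mem_edgeSet _).1 he
    intro v hv
    rw [Sym2.mem_iff] at hv
    rcases hv with rfl | rfl
    · exact h.2.1
    · exact h.2.2

/-- edge count bound after deletion -/
lemma ncard_edgeSet_le_delV (G : SimpleGraph α) (S : Finset α) :
    G.edgeSet.ncard ≤ (delV G S).edgeSet.ncard + ∑ v ∈ S, pdeg G v := by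
  classical
  have hfin : G.edgeSet.Finite := Set.toFinite _
  have hfin' : (delV G S).edgeSet.Finite := Set.toFinite _
  have hsub : hfin.toFinset ⊆ hfin'.toFinset ∪ S.biUnion (fun v => (Set.toFinite (G.incidenceSet v)).toFinset) := by
    intro e he
    rw [Set.Finite.mem_toFinset] at he
    by_cases hS : ∃ v ∈ S, v ∈ e
    · obtain ⟨v, hvS, hve⟩ := hS
      refine Finset.mem_union_right _ (Finset.mem_biUnion.2 ⟨v, hvS, ?_⟩)
      rw [Set.Finite.mem_toFinset]
      exact ⟨he, hve⟩
    · push_neg at hS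
      refine Finset.mem_union_left _ ?_
      rw [Set.Finite.mem_toFinset]
      induction e with
      | _ x y =>
        have hadj : G.Adj x y := (SimpleGraph.mem_edgeSet G).1 he
        exact (SimpleGraph.mem_edgeSet _).2
          ⟨hadj, fun hxS => hS x hxS (Sym2.mem_mk_left x y), fun hyS => hS y hyS (Sym2.mem_mk_right x y)⟩
  calc G.edgeSet.ncard = hfin.toFinset.card := Set.ncard_eq_toFinset_card _ hfin
    _ ≤ (hfin'.toFinset ∪ S.biUnion _).card := Finset.card_le_card hsub
    _ ≤ hfin'.toFinset.card + (S.biUnion (fun v => (Set.toFinite (G.incidenceSet v)).toFinset)).card :=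
        Finset.card_union_le _ _
    _ ≤ (delV G S).edgeSet.ncard + ∑ v ∈ S, pdeg G v := by
        have h1 : hfin'.toFinset.card = (delV G S).edgeSet.ncard := (Set.ncard_eq_toFinset_card _ hfin').symm
        have h2 := Finset.card_biUnion_le (s := S) (t := fun v => (Set.toFinite (G.incidenceSet v)).toFinset)
        have h3 : ∑ v ∈ S, ((Set.toFinite (G.incidenceSet v)).toFinset).card = ∑ v ∈ S, pdeg G v := by
          refine Finset.sum_congr rfl fun v _ => ?_
          rw [← Set.ncard_eq_toFinset_card _ _, ncard_incidenceSet]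
        omega


lemma exists_edge_avoiding_vertex {G : SimpleGraph α} {a : α}
    (h : pdeg G a < G.edgeSet.ncard) : ∃ f ∈ G.edgeSet, a ∉ f := by
  by_contra hcon
  push_neg at hcon
  have hsub : G.edgeSet ⊆ G.incidenceSet a := fun e he => ⟨he, hcon e he⟩
  have := Set.ncard_le_ncard hsub (Set.toFinite _)
  rw [ncard_incidenceSet] at this
  omega

lemma pair_matching {G : SimpleGraph α} {e f : Sym2 α} (he : e ∈ G.edgeSet)
    (hf : f ∈ G.edgeSet) (hdisj : ∀ v, ¬ (v ∈ e ∧ v ∈ f)) :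
    IsMatchingIn G {e, f} ∧ ({e, f} : Finset (Sym2 α)).card = 2 := by
  have hne : e ≠ f := by
    rintro rfl
    induction e with
    | _ x y => exact hdisj x ⟨Sym2.mem_mk_left x y, Sym2.mem_mk_left x y⟩
  constructor
  · constructor
    · intro t ht
      rw [Finset.coe_insert, Set.mem_insert_iff, Finset.coe_singleton, Set.mem_singleton_iff] at ht
      rcases ht with rfl | rfl
      · exact he
      · exact hf
    · intro t ht u hu hne' v hv
      simp only [Finset.coe_insert, Set.mem_insert_iff, Finset.coe_singleton,
        Set.mem_singleton_iff] at ht hu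
      rcases ht with rfl | rfl <;> rcases hu with rfl | rfl
      · exact absurd rfl hne'
      · exact hdisj v hv
      · exact hdisj v ⟨hv.2, hv.1⟩
      · exact absurd rfl hne'
  · rw [Finset.card_insert_of_notMem (by simpa using hne), Finset.card_singleton]

lemma two_disjoint_edges {G : SimpleGraph α} {D : ℕ} (hdeg : ∀ v, pdeg G v ≤ D)
    (hE : D + 1 ≤ G.edgeSet.ncard) (h4 : 4 ≤ D) :
    ∃ M : Finset (Sym2 α), IsMatchingIn G M ∧ M.card = 2 := by
  by_contra hno
  push_neg at hno
  have hshare : ∀ e ∈ G.edgeSet, ∀ f ∈ G.edgeSet, ∃ v, v ∈ e ∧ v ∈ f := by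
    intro e he f hf
    by_contra hcon
    push_neg at hcon
    obtain ⟨hm, hc⟩ := pair_matching he hf (by intro v hv; exact hcon v hv.1 hv.2)
    exact (hno _ hm) hc
  have hne : G.edgeSet.Nonempty := by
    rw [Set.nonempty_iff_ne_empty]
    intro hemp
    rw [hemp, Set.ncard_empty] at hE
    omega
  obtain ⟨e₁, he₁⟩ := hne
  induction e₁ with
  | _ a b =>
    have hab : G.Adj a b := (SimpleGraph.mem_edgeSet G).1 he₁
    obtain ⟨f, hf, haf⟩ := exists_edge_avoiding_vertex (G := G) (a := a) (by have := hdeg a; omega)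
    have hbf : b ∈ f := by
      obtain ⟨v, hv1, hv2⟩ := hshare _ he₁ _ hf
      rw [Sym2.mem_iff] at hv1
      rcases hv1 with rfl | rfl
      · exact absurd hv2 haf
      · exact hv2
    obtain ⟨c, rfl⟩ := (Sym2.mem_iff_exists).1 hbf
    have hca : c ≠ a := by rintro rfl; exact haf (Sym2.mem_mk_right b c)
    have hbc : G.Adj b c := (SimpleGraph.mem_edgeSet G).1 hf
    obtain ⟨g, hg, hbg⟩ := exists_edge_avoiding_vertex (G := G) (a := b) (by have := hdeg b; omega)
    have hag : a ∈ g := by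
      obtain ⟨v, hv1, hv2⟩ := hshare _ he₁ _ hg
      rw [Sym2.mem_iff] at hv1
      rcases hv1 with rfl | rfl
      · exact hv2
      · exact absurd hv2 hbg
    obtain ⟨d, rfl⟩ := (Sym2.mem_iff_exists).1 hag
    have had : G.Adj a d := (SimpleGraph.mem_edgeSet G).1 hg
    have hcd : d = c := by
      obtain ⟨v, hv1, hv2⟩ := hshare _ hf _ hg
      rw [Sym2.mem_iff] at hv1 hv2
      rcases hv1 with rfl | rfl
      · exfalso
        rcases hv2 with h | h
        · exact hab.ne h.symm
        · exact hbg (by rw [h]; exact Sym2.mem_mk_right a d)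
      · rcases hv2 with h | h
        · exact absurd h hca
        · exact h.symm
    rw [hcd] at hg hbg had
    -- every edge is one of s(a,b), s(a,c), s(b,c)
    have hsub : G.edgeSet ⊆ ↑({s(a,b), s(a,c), s(b,c)} : Finset (Sym2 α)) := by
      intro t ht
      simp only [Finset.coe_insert, Set.mem_insert_iff, Finset.coe_singleton,
        Set.mem_singleton_iff]
      obtain ⟨v, hv1, hv2⟩ := hshare _ ht _ he₁
      rw [Sym2.mem_iff] at hv2
      rcases hv2 with rfl | rfl
      · -- a ∈ t
        obtain ⟨x, rfl⟩ := (Sym2.mem_iff_exists).1 hv1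
        obtain ⟨w, hw1, hw2⟩ := hshare _ ht _ hf
        rw [Sym2.mem_iff] at hw1 hw2
        rcases hw1 with rfl | rfl
        · exfalso
          rcases hw2 with h | h
          · exact hab.ne h
          · exact hca h.symm
        · rcases hw2 with h | h
          · rw [h]; exact Or.inl rfl
          · rw [h]; exact Or.inr (Or.inl rfl)
      · -- b ∈ t
        obtain ⟨x, rfl⟩ := (Sym2.mem_iff_exists).1 hv1
        obtain ⟨w, hw1, hw2⟩ := hshare _ ht _ hg
        rw [Sym2.mem_iff] at hw1 hw2
        rcases hw1 with rfl | rfl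
        · exfalso
          rcases hw2 with h | h
          · exact hab.ne h.symm
          · exact hbc.ne h
        · rcases hw2 with h | h
          · rw [h]; exact Or.inl (Sym2.eq_swap)
          · rw [h]; exact Or.inr (Or.inr rfl)
    have h3 := Set.ncard_le_ncard hsub (Finset.finite_toSet _)
    rw [Set.ncard_coe_finset] at h3
    have hcard3 : ({s(a,b), s(a,c), s(b,c)} : Finset (Sym2 α)).card ≤ 3 :=
      le_trans (Finset.card_insert_le _ _) (by
        have := Finset.card_insert_le s(a,c) ({s(b,c)} : Finset (Sym2 α))
        simp only [Finset.card_singleton] at this ⊢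
        omega)
    omega

end Helpers2

section Main
variable {α : Type} [Fintype α] [DecidableEq α]

lemma partB {Δ : ℕ} (hΔ : 10000 ≤ Δ) :
    ∀ ℓ : ℕ, ∀ G : SimpleGraph α, (∀ v, pdeg G v ≤ Δ) → 10000 * ℓ ≤ Δ →
    ℓ * Δ + 1 ≤ G.edgeSet.ncard → 2 ≤ G.edgeSet.ncard → GoalI G ℓ := by
  intro ℓ
  induction ℓ with
  | zero =>
    intro G hdeg _ hE hE2
    exact goalI_zero hE2
  | succ k ih =>
    intro G hdeg hsmall hE hE2
    obtain ⟨M₀, hM₀, hmax⟩ := exists_max_matching G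
    by_cases hbig : k + 3 ≤ M₀.card
    · exact goalI_of_big_matching hM₀ (by omega)
    · have hcover := max_matching_cover hM₀ hmax
      have hEsum := ncard_edgeSet_le_sum G (mvert M₀) hcover
      by_cases hud : ∃ u, Δ < 4 * pdeg G u
      · obtain ⟨u, hu⟩ := hud
        by_cases hk : 1 ≤ k
        · -- inductive case
          have hdeg' : ∀ v, pdeg (delV G {u}) v ≤ Δ := fun v => le_trans (pdeg_delV_le v) (hdeg v)
          have hE' : k * Δ + 1 ≤ (delV G {u}).edgeSet.ncard := by
            have h1 := ncard_edgeSet_le_delV G {u}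
            have h2 : ∑ v ∈ ({u} : Finset α), pdeg G v ≤ Δ := by simpa using hdeg u
            have h3 : (k + 1) * Δ = k * Δ + Δ := by ring
            omega
          obtain ⟨M, hM, hMcard, x, y, hxy, hxM⟩ := ih (delV G {u}) hdeg' (by omega) hE'
            (by have h4 : 1 * Δ ≤ k * Δ := Nat.mul_le_mul_right Δ hk; omega)
          have hwpick : (mvert M ∪ {x, y, u}).card < pdeg G u := by
            have hc1 := card_mvert_le M
            have hc2 : ({x, y, u} : Finset α).card ≤ 3 := by
              refine le_trans (Finset.card_insert_le _ _) ?_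
              refine Nat.succ_le_succ (le_trans (Finset.card_insert_le _ _) ?_)
              simp
            have hc3 := Finset.card_union_le (mvert M) ({x, y, u} : Finset α)
            omega
          obtain ⟨w, huw, hw⟩ := exists_neighbor_avoid hwpick
          rw [Finset.mem_union, not_or] at hw
          obtain ⟨hwM0, hwxyu⟩ := hw
          have hMG : IsMatchingIn G M := isMatchingIn_graph_mono delV_adj_le hM
          have huM : ∀ e ∈ M, u ∉ e := fun e he hue =>
            (edge_delV_avoid (hM.1 (by exact_mod_cast he)) u hue) (Finset.mem_singleton_self u)
          have hwM : ∀ e ∈ M, w ∉ e := notMem_mvert_iff.1 hwM0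
          obtain ⟨hins, hcard⟩ := isMatchingIn_insert hMG huw huM hwM
          have hxu : x ≠ u := fun h => (hxy.2.1) (by rw [← h]; exact Finset.mem_singleton_self x)
          have hxw : x ≠ w := by
            rintro rfl
            exact hwxyu (by simp)
          refine ⟨insert s(u, w) M, hins, by omega, x, y, hxy.1, ?_⟩
          intro e he
          rw [Finset.mem_insert] at he
          rcases he with rfl | he
          · rw [Sym2.mem_iff]
            push_neg
            exact ⟨hxu, hxw⟩
          · exact hxM e he
        · -- k = 0 : ℓ = 1
          have hk0 : k = 0 := by omega
          subst hk0
          have hpu : pdeg G u < G.edgeSet.ncard := by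
            have := hdeg u
            omega
          obtain ⟨f, hf, huf⟩ := exists_edge_avoiding_vertex hpu
          induction f with
          | _ x y =>
            have hxy : G.Adj x y := (SimpleGraph.mem_edgeSet G).1 hf
            have hux : u ≠ x := fun h => huf (by rw [h]; exact Sym2.mem_mk_left x y)
            have huy : u ≠ y := fun h => huf (by rw [h]; exact Sym2.mem_mk_right x y)
            have hp1 : ({x, y, u} : Finset α).card < pdeg G u := by
              have hc2 : ({x, y, u} : Finset α).card ≤ 3 := by
                refine le_trans (Finset.card_insert_le _ _) ?_
                refine Nat.succ_le_succ (le_trans (Finset.card_insert_le _ _) ?_)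
                simp
              omega
            obtain ⟨w, huw, hw⟩ := exists_neighbor_avoid hp1
            simp only [Finset.mem_insert, Finset.mem_singleton, not_or] at hw
            obtain ⟨hwx, hwy, hwu⟩ := hw
            have hdisj2 : ∀ v : α, ¬ (v ∈ s(u, w) ∧ v ∈ s(x, y)) := by
              rintro v ⟨hv1, hv2⟩
              rw [Sym2.mem_iff] at hv1 hv2
              rcases hv1 with rfl | rfl
              · rcases hv2 with h | h
                · exact hux h
                · exact huy h
              · rcases hv2 with h | h
                · exact hwx h
                · exact hwy h
            obtain ⟨hm2, hc2⟩ := pair_matching ((SimpleGraph.mem_edgeSet G).2 huw) hf hdisj2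
            have hp2 : ({w, x, y, u} : Finset α).card < pdeg G u := by
              have hc4 : ({w, x, y, u} : Finset α).card ≤ 4 := by
                refine le_trans (Finset.card_insert_le _ _) ?_
                refine Nat.succ_le_succ ?_
                refine le_trans (Finset.card_insert_le _ _) ?_
                refine Nat.succ_le_succ (le_trans (Finset.card_insert_le _ _) ?_)
                simp
              omega
            obtain ⟨w', huw', hw'⟩ := exists_neighbor_avoid hp2
            simp only [Finset.mem_insert, Finset.mem_singleton, not_or] at hw'
            obtain ⟨hw'w, hw'x, hw'y, hw'u⟩ := hw'
            refine ⟨{s(u, w), s(x, y)}, hm2, by omega, w', u, huw'.symm, ?_⟩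
            intro e he
            rw [Finset.mem_insert, Finset.mem_singleton] at he
            rcases he with rfl | rfl
            · rw [Sym2.mem_iff]; push_neg; exact ⟨hw'u, hw'w⟩
            · rw [Sym2.mem_iff]; push_neg; exact ⟨hw'x, hw'y⟩
      · -- all degrees small : contradiction
        push_neg at hud
        have hsum4 : ∑ v ∈ mvert M₀, 4 * pdeg G v ≤ (mvert M₀).card * Δ := by
          refine le_trans (Finset.sum_le_card_nsmul _ _ Δ fun v _ => hud v) (by simp [mul_comm])
        rw [← Finset.mul_sum] at hsum4
        have hcard : (mvert M₀).card ≤ 2 * (k + 2) := by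
          have := card_mvert_le M₀
          omega
        have hmul : (mvert M₀).card * Δ ≤ (2 * (k + 2)) * Δ := Nat.mul_le_mul_right Δ hcard
        have hmul2 : 4 * ((k+1) * Δ + 1) ≤ 4 * G.edgeSet.ncard := by omega
        have hfin : (4 * (k+1)) * Δ + 4 ≤ (2 * (k + 2)) * Δ := by
          calc (4 * (k+1)) * Δ + 4 = 4 * ((k+1) * Δ + 1) := by ring
          _ ≤ 4 * G.edgeSet.ncard := hmul2
          _ ≤ 4 * ∑ v ∈ mvert M₀, pdeg G v := by omega
          _ ≤ (mvert M₀).card * Δ := hsum4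
          _ ≤ _ := hmul
        have hge : (2 * (k + 2)) * Δ ≤ (4 * (k+1)) * Δ := Nat.mul_le_mul_right Δ (by omega)
        omega


lemma partA {Δ Δ' : ℕ} (h1 : 100 ≤ Δ') (h2 : 100 * Δ' ≤ Δ) {k : ℕ} (h3 : 100 * (k + 1) ≤ Δ')
    (G : SimpleGraph α) (hdeg : ∀ v, pdeg G v ≤ Δ)
    (hE : k * Δ + Δ' ≤ G.edgeSet.ncard) :
    GoalI G (k + 1) ∨ (∃ T : Finset α, T.card = k + 1 ∧ ∀ v ∈ T, Δ' ≤ pdeg G v) := by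
  classical
  have hΔ : 10000 ≤ Δ := by omega
  by_cases hbig : (k + 1) * Δ + 1 ≤ G.edgeSet.ncard
  · exact Or.inl (partB hΔ (k + 1) G hdeg (by omega) hbig (by omega))
  · push_neg at hbig
    set H : Finset α := Finset.univ.filter (fun v => Δ' ≤ pdeg G v) with hH
    have hHmem : ∀ v ∈ H, Δ' ≤ pdeg G v := fun v hv => (Finset.mem_filter.1 hv).2
    by_cases hT : k + 1 ≤ H.card
    · obtain ⟨T, hTsub, hTcard⟩ := Finset.exists_subset_card_eq hT
      exact Or.inr ⟨T, hTcard, fun v hv => hHmem v (hTsub hv)⟩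
    · push_neg at hT
      have hHle : H.card ≤ k := by omega
      have hdeg' : ∀ v, pdeg (delV G H) v ≤ Δ' - 1 := by
        intro v
        by_cases hv : v ∈ H
        · rw [pdeg_delV_of_mem hv]; omega
        · have : pdeg G v < Δ' := by
            by_contra hcon
            exact hv (Finset.mem_filter.2 ⟨Finset.mem_univ v, by omega⟩)
          have := pdeg_delV_le (G := G) (S := H) v
          omega
      have hdel := ncard_edgeSet_le_delV G H
      have hsumH : ∑ v ∈ H, pdeg G v ≤ H.card * Δ := by
        refine le_trans (Finset.sum_le_card_nsmul _ _ Δ fun v _ => hdeg v) (by simp [mul_comm])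
      set h := H.card with hh
      set z := k - h with hz
      have hkzh : k = h + z := by omega
      have hE' : z * Δ + Δ' ≤ (delV G H).edgeSet.ncard := by
        have hexp : k * Δ = h * Δ + z * Δ := by rw [hkzh]; ring
        omega
      obtain ⟨M', hM', hmax'⟩ := exists_max_matching (delV G H)
      set m' := M'.card with hm'def
      have hcover' := ncard_edgeSet_le_sum (delV G H) (mvert M') (max_matching_cover hM' hmax')
      have hsum' : ∑ v ∈ mvert M', pdeg (delV G H) v ≤ (mvert M').card * (Δ' - 1) := by
        refine le_trans (Finset.sum_le_card_nsmul _ _ (Δ' - 1) fun v _ => hdeg' v) (by simp [mul_comm])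
      have hmv' := card_mvert_le M'
      have hEcover : (delV G H).edgeSet.ncard ≤ (2 * m') * (Δ' - 1) :=
        le_trans hcover' (le_trans hsum' (Nat.mul_le_mul_right _ hmv'))
      have hm2 : 2 ≤ m' := by
        obtain ⟨N, hN, hNcard⟩ := two_disjoint_edges hdeg' (by omega) (by omega)
        have := hmax' N hN
        omega
      have hm50 : 50 * z + 1 ≤ m' := by
        have hzD : z * (100 * Δ') ≤ z * Δ := Nat.mul_le_mul_left z h2
        have hkey : (100 * z + 1) * Δ' < (2 * m') * Δ' := by
          have e1 : z * (100 * Δ') = (100 * z) * Δ' := by ring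
          have e2 : (2 * m') * (Δ' - 1) + (2 * m') * 1 = (2 * m') * Δ' := by
            have : Δ' - 1 + 1 = Δ' := by omega
            calc (2 * m') * (Δ' - 1) + (2 * m') * 1 = (2 * m') * ((Δ' - 1) + 1) := by ring
            _ = (2 * m') * Δ' := by rw [this]
          have e3 : (100 * z + 1) * Δ' = (100 * z) * Δ' + Δ' := by ring
          omega
        have := Nat.lt_of_mul_lt_mul_right hkey
        omega
      by_cases hcase : k + 3 ≤ m' + h
      · -- big matching
        have ht : k + 3 - h ≤ m' := by omega
        obtain ⟨T', hT'sub, hT'card⟩ := Finset.exists_subset_card_eq ht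
        have hT'G : IsMatchingIn G T' :=
          isMatchingIn_graph_mono delV_adj_le (isMatchingIn_mono hT'sub hM')
        have hdisj : ∀ v ∈ H, ∀ e ∈ T', v ∉ e := by
          intro v hv e he hve
          exact edge_delV_avoid ((isMatchingIn_mono hT'sub hM').1 (by exact_mod_cast he)) v hve hv
        have hdegH : ∀ v ∈ H, 2 * T'.card + 2 * H.card < pdeg G v := by
          intro v hv
          have := hHmem v hv
          rw [hT'card]
          omega
        obtain ⟨N', hN', hsub', hcard'⟩ := extend_matching G H T' hT'G hdisj hdegH
        refine Or.inl (goalI_of_big_matching hN' ?_)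
        rw [hcard', hT'card]
        omega
      · -- tight case
        push_neg at hcase
        have hz0 : z = 0 ∧ h = k ∧ m' = 2 := by omega
        obtain ⟨hz0, hhk, hm'2⟩ := hz0
        have hM'G : IsMatchingIn G M' := isMatchingIn_graph_mono delV_adj_le hM'
        have hdisj : ∀ v ∈ H, ∀ e ∈ M', v ∉ e := by
          intro v hv e he hve
          exact edge_delV_avoid (hM'.1 (by exact_mod_cast he)) v hve hv
        have hdegH : ∀ v ∈ H, 2 * M'.card + 2 * H.card < pdeg G v := by
          intro v hv
          have := hHmem v hv
          omega
        obtain ⟨M, hM, hsubM, hcardM⟩ := extend_matching G H M' hM'G hdisj hdegH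
        have hcardM' : M.card = k + 2 := by omega
        have hmvM := card_mvert_le M
        have hout : ∃ v₀ ∈ mvert M', ∃ x, (delV G H).Adj v₀ x ∧ x ∉ mvert M := by
          by_contra hcon
          push_neg at hcon
          have hpd : ∀ v₀ ∈ mvert M', pdeg (delV G H) v₀ ≤ (mvert M).card := by
            intro v₀ hv₀
            have hsub2 : {x | (delV G H).Adj v₀ x} ⊆ ↑(mvert M) := fun x hx => hcon v₀ hv₀ x hx
            have := Set.ncard_le_ncard hsub2 (Finset.finite_toSet _)
            rwa [Set.ncard_coe_finset] at this
          have hle : ∑ v ∈ mvert M', pdeg (delV G H) v ≤ (mvert M').card * (mvert M).card :=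
            le_trans (Finset.sum_le_card_nsmul _ _ _ hpd) (by simp [mul_comm])
          have h4 : (mvert M').card ≤ 4 := by omega
          have h5 : (mvert M).card ≤ 2 * (k + 2) := by omega
          have h6 : (mvert M').card * (mvert M).card ≤ 4 * (2 * (k + 2)) :=
            Nat.mul_le_mul h4 h5
          omega
        obtain ⟨v₀, hv₀, x, hadj, hxM⟩ := hout
        refine Or.inl ⟨M, hM, hcardM', x, v₀, (delV_adj_le _ _ hadj).symm, ?_⟩
        exact notMem_mvert_iff.1 hxM

end Main


/-- A graph with `Δ(G) ≤ Δ` and `e(G) ≥ (ℓ−1)Δ + Δ'` contains either a matching of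
size `ℓ+1` together with an edge avoiding it, or `ℓ` vertices of degree at least `Δ'`;
moreover, under slightly stronger edge bounds the first alternative holds. -/
theorem good_matching :
    ∃ c : ℝ, c ∈ Set.Ioo (0 : ℝ) 1 ∧
      ∀ Δ Δ' : ℕ, 1 ≤ Δ → 1 ≤ Δ' → ∀ ℓ : ℕ,
        (ℓ : ℝ) ≤ c * Δ' → (Δ' : ℝ) ≤ c * Δ → 1 / c ≤ (Δ' : ℝ) →
      ∀ {α : Type} [Fintype α] [DecidableEq α], ∀ G : SimpleGraph α,
        (∀ v, pdeg G v ≤ Δ) →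
        (((ℓ : ℤ) - 1) * Δ + Δ' ≤ (G.edgeSet.ncard : ℤ)) →
      ((∃ M : Finset (Sym2 α), IsMatchingIn G M ∧ M.card = ℓ + 1 ∧
          ∃ u v : α, G.Adj u v ∧ ∀ e ∈ M, u ∉ e) ∨
        (∃ T : Finset α, T.card = ℓ ∧ ∀ v ∈ T, Δ' ≤ pdeg G v)) ∧
      (((1 ≤ ℓ ∧ ℓ * Δ + 1 ≤ G.edgeSet.ncard) ∨ (ℓ = 0 ∧ 2 ≤ G.edgeSet.ncard)) →
        (∃ M : Finset (Sym2 α), IsMatchingIn G M ∧ M.card = ℓ + 1 ∧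
          ∃ u v : α, G.Adj u v ∧ ∀ e ∈ M, u ∉ e)) := by
  refine ⟨1/100, by norm_num, ?_⟩
  intro Δ Δ' hΔ1 hΔ'1 ℓ hℓc hΔ'c hcinv α _ _ G hdeg hE
  have h1 : 100 ≤ Δ' := by
    norm_num at hcinv
    exact_mod_cast hcinv
  have h2 : 100 * Δ' ≤ Δ := by
    have hr : (100 * Δ' : ℝ) ≤ (Δ : ℝ) := by linarith
    exact_mod_cast hr
  have h3 : 100 * ℓ ≤ Δ' := by
    have hr : (100 * ℓ : ℝ) ≤ (Δ' : ℝ) := by linarith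
    exact_mod_cast hr
  cases ℓ with
  | zero =>
    constructor
    · exact Or.inr ⟨∅, by simp, by simp⟩
    · rintro (⟨h0, _⟩ | ⟨_, h2'⟩)
      · omega
      · exact goalI_zero h2'
  | succ k =>
    have hEk : k * Δ + Δ' ≤ G.edgeSet.ncard := by
      have h := hE
      push_cast at h
      have h' : ((k * Δ + Δ' : ℕ) : ℤ) ≤ (G.edgeSet.ncard : ℤ) := by push_cast; linarith
      exact_mod_cast h'
    constructor
    · rcases partA h1 h2 (by omega) G hdeg hEk with hA | hA
      · exact Or.inl hA
      · exact Or.inr hA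
    · rintro (⟨_, hB⟩ | ⟨h0, _⟩)
      · refine partB (by omega) (k + 1) G hdeg (by omega) hB ?_
        have h5 : 1 * Δ ≤ (k + 1) * Δ := Nat.mul_le_mul_right Δ (by omega)
        omega
      · exact absurd h0 (Nat.succ_ne_zero k)
end

section
/- Let G be a graph whose vertex set is partitioned into X and Y. Suppose that G[Y] contains a matching M' of size ℓ + 1 and an edge uv with u ∉ V(M'). Let M be a non-empty matching of even size m consisting of edges between X and Y. Then G contains a path system P such that: (i) the edges of P between X and Y are exactly M, and P ⊆ M ∪ M' ∪ {uv}; (ii) P has exactly ℓ + 1 edges inside Y; (iii) P contains at least two paths each having one endpoint in X and one endpoint in Y. -/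
/-- `P` is a path system: a vertex-disjoint union of paths, i.e. every vertex has
degree at most 2 and there are no cycles. -/
def IsPathSystem {V : Type*} (P : SimpleGraph V) : Prop :=
  (∀ v, pdeg P v ≤ 2) ∧ P.IsAcyclic

/-- The path system `P` contains (at least) two vertex-disjoint paths, each with one
endpoint in `S` and one endpoint in `T`. -/
def HasTwoPathsBetween {V : Type*} (P : SimpleGraph V) (S T : Finset V) : Prop :=
  ∃ x1 x2 y1 y2 : V, x1 ∈ S ∧ x2 ∈ S ∧ y1 ∈ T ∧ y2 ∈ T ∧
    pdeg P x1 = 1 ∧ pdeg P x2 = 1 ∧ pdeg P y1 = 1 ∧ pdeg P y2 = 1 ∧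
    P.Reachable x1 y1 ∧ P.Reachable x2 y2 ∧ ¬ P.Reachable x1 x2

namespace ExtAux

open SimpleGraph

variable {V : Type*}

/-- Degree in a graph built from a finite edge set is the number of incident edges. -/
lemma pdeg_fromEdgeSet [DecidableEq V] (F : Finset (Sym2 V)) (hF : ∀ e ∈ F, ¬ e.IsDiag)
    (v : V) :
    pdeg (SimpleGraph.fromEdgeSet (↑F : Set (Sym2 V))) v
      = (F.filter (fun e => v ∈ e)).card := by
  classical
  have hinj : Set.InjOn (fun u => s(v, u))
      {u | (SimpleGraph.fromEdgeSet (↑F : Set (Sym2 V))).Adj v u} := by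
    intro a _ b _ hab
    exact Sym2.congr_right.mp hab
  have himg : (fun u => s(v, u)) ''
      {u | (SimpleGraph.fromEdgeSet (↑F : Set (Sym2 V))).Adj v u}
      = ↑(F.filter (fun e => v ∈ e)) := by
    ext e
    constructor
    · rintro ⟨u, hu, rfl⟩
      rw [Set.mem_setOf_eq, SimpleGraph.fromEdgeSet_adj] at hu
      simp only [Finset.coe_filter, Set.mem_setOf_eq]
      exact ⟨by exact_mod_cast hu.1, by simp⟩
    · intro he
      simp only [Finset.coe_filter, Set.mem_setOf_eq] at he
      obtain ⟨b, rfl⟩ := Sym2.mem_iff_exists.mp he.2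
      refine ⟨b, ?_, rfl⟩
      rw [Set.mem_setOf_eq, SimpleGraph.fromEdgeSet_adj]
      refine ⟨by exact_mod_cast he.1, ?_⟩
      intro hvb
      exact hF _ he.1 (by rw [← hvb]; simp [Sym2.isDiag_iff_proj_eq])
  rw [pdeg, ← Set.ncard_image_of_injOn hinj, himg, Set.ncard_coe_finset]

/-- In a matching, each vertex is in at most one edge. -/
lemma count_le_one [DecidableEq V] {A : Finset (Sym2 V)}
    (hA : (A : Set (Sym2 V)).Pairwise fun e f => ∀ z : V, ¬ (z ∈ e ∧ z ∈ f)) (z : V) :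
    (A.filter (fun e => z ∈ e)).card ≤ 1 := by
  rw [Finset.card_le_one]
  intro e he f hf
  rw [Finset.mem_filter] at he hf
  by_contra hne
  exact hA (by exact_mod_cast he.1) (by exact_mod_cast hf.1) hne z ⟨he.2, hf.2⟩

lemma count_eq_one [DecidableEq V] {A : Finset (Sym2 V)}
    (hA : (A : Set (Sym2 V)).Pairwise fun e f => ∀ z : V, ¬ (z ∈ e ∧ z ∈ f)) {z : V}
    (hz : ∃ e ∈ A, z ∈ e) :
    (A.filter (fun e => z ∈ e)).card = 1 := by
  refine le_antisymm (count_le_one hA z) ?_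
  obtain ⟨e, he, hze⟩ := hz
  exact Finset.card_pos.mpr ⟨e, Finset.mem_filter.mpr ⟨he, hze⟩⟩

lemma count_eq_zero [DecidableEq V] {A : Finset (Sym2 V)} {z : V}
    (hz : ∀ e ∈ A, z ∉ e) :
    (A.filter (fun e => z ∈ e)).card = 0 := by
  rw [Finset.card_eq_zero, Finset.filter_eq_empty_iff]
  exact hz

/-- The start of a cycle is on two distinct edges of the cycle. -/
lemma cycle_two_edges {P : SimpleGraph V} {a : V} (c : P.Walk a a) (hc : c.IsCycle) :
    ∃ b1 b2 : V, b1 ≠ b2 ∧ s(a, b1) ∈ c.edges ∧ s(a, b2) ∈ c.edges := by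
  cases c with
  | nil => exact absurd hc SimpleGraph.Walk.IsCycle.not_of_nil
  | @cons _ b _ h q =>
    rw [SimpleGraph.Walk.cons_isCycle_iff] at hc
    obtain ⟨hq, hnab⟩ := hc
    obtain ⟨b2, hadj, r, hr⟩ := SimpleGraph.Walk.exists_eq_cons_of_ne h.ne q.reverse
    have h2 : s(a, b2) ∈ q.edges := by
      have : s(a, b2) ∈ q.reverse.edges := by rw [hr]; simp
      rwa [SimpleGraph.Walk.edges_reverse, List.mem_reverse] at this
    refine ⟨b, b2, ?_, by simp, List.mem_cons_of_mem _ h2⟩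
    intro heq
    subst heq
    exact hnab h2

/-- Every vertex of a cycle is on two distinct edges of the cycle. -/
lemma cycle_two_edges_at {P : SimpleGraph V} {a x : V} (c : P.Walk a a) (hc : c.IsCycle)
    (hx : x ∈ c.support) :
    ∃ b1 b2 : V, b1 ≠ b2 ∧ s(x, b1) ∈ c.edges ∧ s(x, b2) ∈ c.edges := by
  classical
  obtain ⟨b1, b2, hne, h1, h2⟩ := cycle_two_edges (c.rotate x hx) (hc.rotate hx)
  rw [(c.rotate_edges x hx).mem_iff] at h1 h2
  exact ⟨b1, b2, hne, h1, h2⟩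

/-- The union of a matching touching `X` and a matching inside `Y` is acyclic. -/
lemma acyclic_union_matchings {X Y : Finset V}
    (hXY : Disjoint X Y)
    (M1 M2 : Set (Sym2 V))
    (h1 : M1.Pairwise fun e f => ∀ z : V, ¬ (z ∈ e ∧ z ∈ f))
    (h2 : M2.Pairwise fun e f => ∀ z : V, ¬ (z ∈ e ∧ z ∈ f))
    (h1X : ∀ e ∈ M1, ∃ a ∈ X, a ∈ e)
    (h2Y : ∀ e ∈ M2, ∀ z ∈ e, z ∈ Y) :
    (SimpleGraph.fromEdgeSet (M1 ∪ M2)).IsAcyclic := by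
  intro a c hc
  have hedge : ∀ e ∈ c.edges, e ∈ M1 ∪ M2 := by
    intro e he
    have h' := c.edges_subset_edgeSet he
    rw [SimpleGraph.edgeSet_fromEdgeSet] at h'
    exact h'.1
  by_cases hX : ∃ x ∈ c.support, x ∈ X
  · obtain ⟨x, hxs, hxX⟩ := hX
    obtain ⟨b1, b2, hne, h1e, h2e⟩ := cycle_two_edges_at c hc hxs
    have hM1 : ∀ b, s(x, b) ∈ c.edges → s(x, b) ∈ M1 := by
      intro b hb
      rcases hedge _ hb with h | h
      · exact h
      · exact absurd (h2Y _ h x (by simp)) (fun hY => Finset.disjoint_left.mp hXY hxX hY)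
    have heq : s(x, b1) = s(x, b2) := by
      by_contra hne2
      exact h1 (hM1 _ h1e) (hM1 _ h2e) hne2 x ⟨by simp, by simp⟩
    exact hne (Sym2.congr_right.mp heq)
  · push_neg at hX
    obtain ⟨b1, b2, hne, h1e, h2e⟩ := cycle_two_edges_at c hc c.start_mem_support
    have hM2 : ∀ b, s(a, b) ∈ c.edges → s(a, b) ∈ M2 := by
      intro b hb
      rcases hedge _ hb with h | h
      · obtain ⟨x, hx, hxe⟩ := h1X _ h
        rcases Sym2.mem_iff.mp hxe with rfl | rfl
        · exact absurd hx (hX _ c.start_mem_support)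
        · exact absurd hx (hX _ (c.snd_mem_support_of_mem_edges hb))
      · exact h
    have heq : s(a, b1) = s(a, b2) := by
      by_contra hne2
      exact h2 (hM2 _ h1e) (hM2 _ h2e) hne2 a ⟨by simp, by simp⟩
    exact hne (Sym2.congr_right.mp heq)

/-- Adding a pendant edge at a previously isolated vertex preserves acyclicity. -/
lemma acyclic_pendant (E : Set (Sym2 V)) (hQ : (SimpleGraph.fromEdgeSet E).IsAcyclic)
    (u v : V) (hne : u ≠ v) (hiso : ∀ e ∈ E, u ∉ e) :
    (SimpleGraph.fromEdgeSet (E ∪ {s(u, v)})).IsAcyclic := by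
  intro a c hc
  by_cases hu : u ∈ c.support
  · obtain ⟨b1, b2, hbne, h1, h2⟩ := cycle_two_edges_at c hc hu
    have hval : ∀ b, s(u, b) ∈ c.edges → b = v := by
      intro b hb
      have h' := c.edges_subset_edgeSet hb
      rw [SimpleGraph.edgeSet_fromEdgeSet] at h'
      rcases h'.1 with h | h
      · exact absurd (by simp : u ∈ s(u, b)) (hiso _ h)
      · rw [Set.mem_singleton_iff] at h
        exact Sym2.congr_right.mp h
    exact hbne ((hval _ h1).trans (hval _ h2).symm)
  · have hsub : ∀ e ∈ c.edges, e ∈ (SimpleGraph.fromEdgeSet E).edgeSet := by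
      intro e he
      have h' := c.edges_subset_edgeSet he
      rw [SimpleGraph.edgeSet_fromEdgeSet] at h' ⊢
      rcases h'.1 with h | h
      · exact ⟨h, h'.2⟩
      · exfalso
        rw [Set.mem_singleton_iff] at h
        subst h
        exact hu (c.fst_mem_support_of_mem_edges he)
    exact hQ (c.transfer _ hsub) (hc.transfer hsub)

lemma acyclic_mono {G H : SimpleGraph V} (h : G ≤ H) (hH : H.IsAcyclic) : G.IsAcyclic :=
  fun _ c hc => hH (c.mapLe h) (hc.mapLe h)

lemma pdeg_eq_degree (G : SimpleGraph V) (v : V) [Fintype (G.neighborSet v)] :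
    pdeg G v = G.degree v := by
  have h : {u | G.Adj v u} = (G.neighborSet v : Set V) := rfl
  rw [pdeg, h, Set.ncard_eq_toFinset_card']
  rfl

/-- In a finite path system, every vertex of degree 1 lies on a path with exactly one
other endpoint. -/
lemma two_ends [Fintype V] (P : SimpleGraph V) (hd : ∀ z, pdeg P z ≤ 2)
    (hac : P.IsAcyclic) (w : V) (hw : pdeg P w = 1) :
    ∃ w', w' ≠ w ∧ pdeg P w' = 1 ∧ P.Reachable w w' ∧
      ∀ z, pdeg P z = 1 → P.Reachable w z → z = w ∨ z = w' := by
  classical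
  set S : Set V := {z | P.Reachable w z} with hS
  have hwS : w ∈ S := (SimpleGraph.Reachable.refl w : P.Reachable w w)
  have hSadj : ∀ z, z ∈ S → ∀ x, P.Adj z x → x ∈ S := by
    intro z hz x h
    exact Set.mem_setOf_eq ▸ (hz.trans h.reachable)
  set T : SimpleGraph S := P.induce S with hT
  have hdeg : ∀ z : S, pdeg T z = pdeg P z.val := by
    intro z
    have himg : Subtype.val '' {u : S | T.Adj z u} = {u | P.Adj z.val u} := by
      ext x
      constructor
      · rintro ⟨u, hu, rfl⟩
        exact hu
      · intro hx
        exact ⟨⟨x, hSadj _ z.2 _ hx⟩, hx, rfl⟩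
    rw [pdeg, pdeg, ← himg, Set.ncard_image_of_injective _ Subtype.val_injective]
  -- connectivity of the component
  have hconn : T.Connected := by
    apply SimpleGraph.induce_connected_of_patches w hwS
    intro z hz
    obtain ⟨p⟩ := (hz : P.Reachable w z)
    refine ⟨{x | x ∈ p.support}, ?_, p.start_mem_support, p.end_mem_support, ?_⟩
    · intro x hx
      exact Set.mem_setOf_eq ▸ ⟨p.takeUntil x hx⟩
    · exact (p.connected_induce_support).preconnected _ _
  have hacT : T.IsAcyclic := by
    intro z c hc
    exact hac (c.map (SimpleGraph.Embedding.induce S).toHom)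
      (hc.map Subtype.val_injective)
  have htree : T.IsTree := ⟨hconn, hacT⟩
  -- at least two vertices
  obtain ⟨w1, hw1⟩ : ∃ w1, P.Adj w w1 := by
    have := hw
    rw [pdeg] at this
    obtain ⟨x, hx⟩ := Set.ncard_eq_one.mp this
    exact ⟨x, by rw [← Set.mem_setOf_eq (p := fun u => P.Adj w u), hx]; rfl⟩
  have hw1S : w1 ∈ S := hSadj _ hwS _ hw1
  have hcard2 : 2 ≤ Fintype.card S := by
    have : (⟨w, hwS⟩ : S) ≠ ⟨w1, hw1S⟩ := by
      intro h
      exact hw1.ne (congrArg Subtype.val h)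
    exact Fintype.one_lt_card_iff_nontrivial.mpr ⟨_, _, this⟩
  letI : DecidableRel T.Adj := Classical.decRel _
  -- min degree 1
  have hdegpos : ∀ z : S, 1 ≤ T.degree z := by
    intro z
    rw [Nat.succ_le_iff, SimpleGraph.degree_pos_iff_exists_adj]
    obtain ⟨z', hz'⟩ := Fintype.exists_ne_of_one_lt_card hcard2 z
    obtain ⟨p⟩ := hconn.preconnected z z'
    cases p with
    | nil => exact absurd rfl hz'
    | cons h q => exact ⟨_, h⟩
  have hdegle : ∀ z : S, T.degree z ≤ 2 := by
    intro z
    rw [← pdeg_eq_degree, hdeg]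
    exact hd _
  -- counting
  have hsum : ∑ z : S, T.degree z = 2 * T.edgeFinset.card :=
    SimpleGraph.sum_degrees_eq_twice_card_edges T
  have hedgecard : T.edgeFinset.card + 1 = Fintype.card S := htree.card_edgeFinset
  set D1 : Finset S := Finset.univ.filter (fun z => T.degree z = 1) with hD1
  have hcardD1 : D1.card = 2 := by
    have h1 : ∑ z ∈ D1, T.degree z = D1.card := by
      rw [Finset.sum_congr rfl (fun z hz => (Finset.mem_filter.mp hz).2)]
      simp [hD1]
    have h2 : ∑ z ∈ Finset.univ.filter (fun z : S => ¬ T.degree z = 1), T.degree z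
        = 2 * (Finset.univ.filter (fun z : S => ¬ T.degree z = 1)).card := by
      rw [Finset.sum_congr rfl (fun z hz => ?_), Finset.sum_const, smul_eq_mul, mul_comm]
      have h3 := (Finset.mem_filter.mp hz).2
      have h4 := hdegpos z
      have h5 := hdegle z
      omega
    have hsplit : ∑ z ∈ D1, T.degree z
        + ∑ z ∈ Finset.univ.filter (fun z : S => ¬ T.degree z = 1), T.degree z
        = ∑ z : S, T.degree z := by
      rw [hD1]
      exact Finset.sum_filter_add_sum_filter_not Finset.univ _ _
    have hpart : D1.card + (Finset.univ.filter (fun z : S => ¬ T.degree z = 1)).card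
        = Fintype.card S := by
      rw [hD1, ← Finset.card_univ]
      exact Finset.card_filter_add_card_filter_not _
    rw [h1, h2] at hsplit
    rw [hsum] at hsplit
    omega
  have hwD1 : (⟨w, hwS⟩ : S) ∈ D1 := by
    rw [hD1, Finset.mem_filter]
    refine ⟨Finset.mem_univ _, ?_⟩
    rw [← pdeg_eq_degree, hdeg]
    exact hw
  obtain ⟨A, B, hAB, hD1eq⟩ := Finset.card_eq_two.mp hcardD1
  have hmemD1 : ∀ z : S, z ∈ D1 ↔ (z = A ∨ z = B) := by
    intro z
    rw [hD1eq]
    simp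
  obtain ⟨W', hW'ne, hW'mem⟩ : ∃ W' : S, W' ≠ (⟨w, hwS⟩ : S) ∧ W' ∈ D1 := by
    rcases (hmemD1 _).mp hwD1 with h | h
    · exact ⟨B, fun hh => hAB (by rw [← h, ← hh]), (hmemD1 _).mpr (Or.inr rfl)⟩
    · exact ⟨A, fun hh => hAB (by rw [← h, ← hh]), (hmemD1 _).mpr (Or.inl rfl)⟩
  have honly : ∀ z : S, z ∈ D1 → z = (⟨w, hwS⟩ : S) ∨ z = W' := by
    intro z hz
    have hzAB := (hmemD1 _).mp hz
    have hwAB := (hmemD1 _).mp hwD1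
    have hW'AB := (hmemD1 _).mp hW'mem
    rcases hwAB with hw' | hw'
    · rcases hzAB with rfl | rfl
      · left; exact hw'.symm
      · rcases hW'AB with hW'' | hW''
        · exact absurd (hW''.trans hw'.symm) hW'ne
        · right; exact hW''.symm
    · rcases hzAB with rfl | rfl
      · rcases hW'AB with hW'' | hW''
        · right; exact hW''.symm
        · exact absurd (hW''.trans hw'.symm) hW'ne
      · left; exact hw'.symm
  refine ⟨W'.val, fun h => hW'ne (Subtype.ext h), ?_, W'.2, ?_⟩
  · have hh := (Finset.mem_filter.mp hW'mem).2
    rw [← pdeg_eq_degree, hdeg] at hh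
    exact hh
  · intro z hz1 hz2
    have hzS : z ∈ S := hz2
    have hzD1 : (⟨z, hzS⟩ : S) ∈ D1 := by
      rw [hD1, Finset.mem_filter]
      refine ⟨Finset.mem_univ _, ?_⟩
      rw [← pdeg_eq_degree, hdeg]
      exact hz1
    rcases honly _ hzD1 with h | h
    · left; exact congrArg Subtype.val h
    · right; exact congrArg Subtype.val h

/-- A finset closed under a fixed-point-free involution has even cardinality. -/
lemma even_card_invol [DecidableEq V] (s : Finset V) (σ : V → V)
    (h1 : ∀ x ∈ s, σ x ∈ s) (h2 : ∀ x ∈ s, σ (σ x) = x) (h3 : ∀ x ∈ s, σ x ≠ x) :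
    Even s.card := by
  classical
  induction s using Finset.strongInduction with
  | _ s ih =>
    rcases Finset.eq_empty_or_nonempty s with rfl | ⟨a, ha⟩
    · simp
    · have hσa : σ a ∈ s := h1 a ha
      have hne : σ a ≠ a := h3 a ha
      set t : Finset V := (s.erase a).erase (σ a) with hdef
      have hts : t ⊂ s := by
        refine Finset.ssubset_iff_of_subset ?_ |>.mpr ⟨a, ha, ?_⟩
        · exact (Finset.erase_subset _ _).trans (Finset.erase_subset _ _)
        · simp [hdef]
      have htmem : ∀ x, x ∈ t ↔ x ∈ s ∧ x ≠ a ∧ x ≠ σ a := by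
        intro x
        simp only [hdef, Finset.mem_erase]
        tauto
      have heven : Even t.card := by
        apply ih t hts
        · intro x hx
          rw [htmem] at hx ⊢
          refine ⟨h1 x hx.1, ?_, ?_⟩
          · intro h
            apply hx.2.2
            rw [← h2 x hx.1, h]
          · intro h
            apply hx.2.1
            have := congrArg σ h
            rwa [h2 x hx.1, h2 a ha] at this
        · intro x hx
          exact h2 x ((htmem x).mp hx).1
        · intro x hx
          exact h3 x ((htmem x).mp hx).1
      have hcard : s.card = t.card + 2 := by
        have h1' : (s.erase a).card = s.card - 1 := Finset.card_erase_of_mem ha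
        have h2' : t.card = (s.erase a).card - 1 :=
          Finset.card_erase_of_mem (Finset.mem_erase.mpr ⟨hne, hσa⟩)
        have : 1 ≤ s.card := Finset.card_pos.mpr ⟨a, ha⟩
        have : 2 ≤ s.card := Finset.one_lt_card.mpr ⟨a, ha, σ a, hσa, hne.symm⟩
        omega
      rw [hcard]
      obtain ⟨k, hk⟩ := heven
      exact ⟨k + 1, by omega⟩

/-- Parity upgrade: a path system on `X ∪ Y` with an even number of degree-1 vertices in
`X`, one of which is joined to a degree-1 vertex of `Y`, has two such paths. -/
lemma parity_upgrade [Fintype V] [DecidableEq V] (P : SimpleGraph V)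
    (hd : ∀ z, pdeg P z ≤ 2) (hac : P.IsAcyclic) (X Y : Finset V)
    (hXY : Disjoint X Y) (hcover : X ∪ Y = Finset.univ)
    (hDeven : Even ((X.filter (fun x => pdeg P x = 1)).card))
    {x0 y0 : V} (hx0 : x0 ∈ X) (hy0 : y0 ∈ Y) (dx0 : pdeg P x0 = 1) (dy0 : pdeg P y0 = 1)
    (hr : P.Reachable x0 y0) :
    HasTwoPathsBetween P X Y := by
  classical
  by_contra hcon
  have hmemY : ∀ z : V, z ∉ X → z ∈ Y := by
    intro z hz
    have : z ∈ X ∪ Y := hcover ▸ Finset.mem_univ z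
    rcases Finset.mem_union.mp this with h | h
    · exact absurd h hz
    · exact h
  have h2e : ∀ x, pdeg P x = 1 → ∃ w', w' ≠ x ∧ pdeg P w' = 1 ∧ P.Reachable x w' ∧
      ∀ z, pdeg P z = 1 → P.Reachable x z → z = x ∨ z = w' :=
    fun x hx => two_ends P hd hac x hx
  set σ : V → V := fun x => if h : pdeg P x = 1 then (h2e x h).choose else x with hσdef
  have hσ : ∀ x (hx : pdeg P x = 1), σ x ≠ x ∧ pdeg P (σ x) = 1 ∧ P.Reachable x (σ x) ∧
      ∀ z, pdeg P z = 1 → P.Reachable x z → z = x ∨ z = σ x := by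
    intro x hx
    rw [hσdef]
    simp only [hx, dif_pos]
    exact (h2e x hx).choose_spec
  -- x0's other end is y0
  have hx0y0 : x0 ≠ y0 := fun h => Finset.disjoint_left.mp hXY hx0 (h ▸ hy0)
  have hσx0 : σ x0 = y0 := by
    rcases (hσ x0 dx0).2.2.2 y0 dy0 hr with h | h
    · exact absurd h.symm hx0y0
    · exact h.symm
  set D : Finset V := X.filter (fun x => pdeg P x = 1) with hDdef
  have hx0D : x0 ∈ D := Finset.mem_filter.mpr ⟨hx0, dx0⟩
  set D' : Finset V := D.erase x0 with hD'def
  have hD'mem : ∀ x, x ∈ D' ↔ x ≠ x0 ∧ x ∈ X ∧ pdeg P x = 1 := by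
    intro x
    rw [hD'def, Finset.mem_erase, hDdef, Finset.mem_filter]
  -- no x in D' is reachable from x0
  have hnoreach : ∀ x ∈ D', ¬ P.Reachable x0 x := by
    intro x hx hre
    rw [hD'mem] at hx
    rcases (hσ x0 dx0).2.2.2 x hx.2.2 hre with h | h
    · exact hx.1 h
    · rw [hσx0] at h
      exact Finset.disjoint_left.mp hXY hx.2.1 (h ▸ hy0)
  -- σ maps D' into D'
  have hmaps : ∀ x ∈ D', σ x ∈ D' := by
    intro x hx
    have hx' := (hD'mem x).mp hx
    obtain ⟨hσne, hσ1, hσre, _⟩ := hσ x hx'.2.2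
    have hσX : σ x ∈ X := by
      by_contra hnX
      have hσY : σ x ∈ Y := hmemY _ hnX
      exact hcon ⟨x0, x, y0, σ x, hx0, hx'.2.1, hy0, hσY, dx0, hx'.2.2, dy0, hσ1,
        hr, hσre, hnoreach x hx⟩
    rw [hD'mem]
    refine ⟨?_, hσX, hσ1⟩
    intro h
    exact hnoreach x hx (h ▸ hσre).symm
  have hinvol : ∀ x ∈ D', σ (σ x) = x := by
    intro x hx
    have hx' := (hD'mem x).mp hx
    have hσx' := (hD'mem _).mp (hmaps x hx)
    obtain ⟨hσne, hσ1, hσre, _⟩ := hσ x hx'.2.2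
    rcases (hσ (σ x) hσ1).2.2.2 x hx'.2.2 hσre.symm with h | h
    · exact absurd h hσne.symm
    · exact h.symm
  have hfpf : ∀ x ∈ D', σ x ≠ x := by
    intro x hx
    exact (hσ x ((hD'mem x).mp hx).2.2).1
  have heven' : Even D'.card := even_card_invol D' σ hmaps hinvol hfpf
  have hcard' : D'.card = D.card - 1 := Finset.card_erase_of_mem hx0D
  have hpos : 1 ≤ D.card := Finset.card_pos.mpr ⟨x0, hx0D⟩
  obtain ⟨k1, hk1⟩ := hDeven
  obtain ⟨k2, hk2⟩ := heven'
  omega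

lemma mem_of_eq_mk_left {α : Type*} {e : Sym2 α} {x y : α} (h : e = s(x, y)) : x ∈ e := by
  rw [h]
  simp

lemma mem_of_eq_mk_right {α : Type*} {e : Sym2 α} {x y : α} (h : e = s(x, y)) : y ∈ e := by
  rw [h]
  simp

/-- Assembly: given a suitable inside-`Y` finset `S` of edges such that `M ∪ S` is a
path system with some `X`–`Y` path, produce the full conclusion. -/
lemma key [Fintype V] [DecidableEq V]
    (G : SimpleGraph V) (X Y : Finset V)
    (hXY : Disjoint X Y) (hcover : X ∪ Y = Finset.univ)
    (ℓ : ℕ) (M' : Finset (Sym2 V)) (u v : V)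
    (M : Finset (Sym2 V)) (hM : IsMatchingIn G M)
    (hMXY : ∀ e ∈ M, ∃ a ∈ X, ∃ b ∈ Y, e = s(a, b))
    (hMeven : Even M.card)
    (S : Finset (Sym2 V))
    (hSnd : ∀ e ∈ S, ¬ e.IsDiag)
    (hSY : ∀ e ∈ S, ∀ z ∈ e, z ∈ Y)
    (hScard : S.card = ℓ + 1)
    (hSsub : (S : Set (Sym2 V)) ⊆ (M' : Set (Sym2 V)) ∪ {s(u, v)})
    (hPS : IsPathSystem (SimpleGraph.fromEdgeSet ((M ∪ S : Finset (Sym2 V)) : Set (Sym2 V))))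
    (hxy : ∃ x ∈ X, ∃ y ∈ Y,
      pdeg (SimpleGraph.fromEdgeSet ((M ∪ S : Finset (Sym2 V)) : Set (Sym2 V))) x = 1 ∧
      pdeg (SimpleGraph.fromEdgeSet ((M ∪ S : Finset (Sym2 V)) : Set (Sym2 V))) y = 1 ∧
      (SimpleGraph.fromEdgeSet ((M ∪ S : Finset (Sym2 V)) : Set (Sym2 V))).Reachable x y) :
    ∃ P : SimpleGraph V, IsPathSystem P ∧
      ({e ∈ P.edgeSet | ∃ a ∈ X, ∃ b ∈ Y, e = s(a, b)} = (M : Set (Sym2 V))) ∧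
      (P.edgeSet ⊆ (M : Set (Sym2 V)) ∪ (M' : Set (Sym2 V)) ∪ {s(u, v)}) ∧
      {e ∈ P.edgeSet | ∀ w ∈ e, w ∈ Y}.ncard = ℓ + 1 ∧
      HasTwoPathsBetween P X Y := by
  classical
  set P := SimpleGraph.fromEdgeSet ((M ∪ S : Finset (Sym2 V)) : Set (Sym2 V)) with hPdef
  have hMnd : ∀ e ∈ M, ¬ e.IsDiag := fun e he => G.not_isDiag_of_mem_edgeSet (hM.1 he)
  have hFnd : ∀ e ∈ M ∪ S, ¬ e.IsDiag := by
    intro e he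
    rcases Finset.mem_union.mp he with h | h
    · exact hMnd e h
    · exact hSnd e h
  have hES : P.edgeSet = ((M ∪ S : Finset (Sym2 V)) : Set (Sym2 V)) := by
    rw [hPdef, SimpleGraph.edgeSet_fromEdgeSet]
    ext e
    simp only [Set.mem_diff, Set.mem_setOf_eq, Finset.mem_coe]
    exact ⟨fun h => h.1, fun h => ⟨h, hFnd e h⟩⟩
  have hMX : ∀ e ∈ M, ∃ a ∈ X, a ∈ e := by
    intro e he
    obtain ⟨a, ha, b, hb, rfl⟩ := hMXY e he
    exact ⟨a, ha, by simp⟩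
  have hSX : ∀ e ∈ S, ∀ a ∈ X, a ∉ e := fun e he a haX hae =>
    Finset.disjoint_left.mp hXY haX (hSY e he a hae)
  have hc1 : {e ∈ P.edgeSet | ∃ a ∈ X, ∃ b ∈ Y, e = s(a, b)} = (M : Set (Sym2 V)) := by
    ext e
    rw [Set.mem_sep_iff, hES]
    constructor
    · rintro ⟨he, a, ha, b, hb, rfl⟩
      rcases Finset.mem_union.mp (Finset.mem_coe.mp he) with h | h
      · exact h
      · exact absurd (by simp : a ∈ s(a, b)) (hSX _ h a ha)
    · intro h
      exact ⟨Finset.mem_coe.mpr (Finset.mem_union_left _ h), hMXY e h⟩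
  have hc2 : P.edgeSet ⊆ (M : Set (Sym2 V)) ∪ (M' : Set (Sym2 V)) ∪ {s(u, v)} := by
    rw [hES]
    intro e he
    rcases Finset.mem_union.mp (Finset.mem_coe.mp he) with h | h
    · exact Or.inl (Or.inl h)
    · rcases hSsub (Finset.mem_coe.mpr h) with h' | h'
      · exact Or.inl (Or.inr h')
      · exact Or.inr h'
  have hc3 : {e ∈ P.edgeSet | ∀ w ∈ e, w ∈ Y} = (S : Set (Sym2 V)) := by
    ext e
    rw [Set.mem_sep_iff, hES]
    constructor
    · rintro ⟨he, hY⟩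
      rcases Finset.mem_union.mp (Finset.mem_coe.mp he) with h | h
      · exfalso
        obtain ⟨a, ha, hae⟩ := hMX e h
        exact Finset.disjoint_left.mp hXY ha (hY a hae)
      · exact h
    · intro h
      exact ⟨Finset.mem_coe.mpr (Finset.mem_union_right _ h), hSY e h⟩
  have hpdeg : ∀ z, pdeg P z = ((M ∪ S).filter (fun e => z ∈ e)).card :=
    pdeg_fromEdgeSet _ hFnd
  have hdisj : Disjoint M S := by
    rw [Finset.disjoint_left]
    intro e heM heS
    obtain ⟨a, ha, hae⟩ := hMX e heM
    exact hSX e heS a ha hae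
  have hXdeg : ∀ x ∈ X, pdeg P x = (M.filter (fun e => x ∈ e)).card := by
    intro x hx
    rw [hpdeg x, Finset.filter_union,
      Finset.card_union_of_disjoint (Finset.disjoint_filter_filter hdisj)]
    have hz : (S.filter (fun e => x ∈ e)) = ∅ :=
      Finset.filter_eq_empty_iff.mpr (fun e he => hSX e he x hx)
    rw [hz]
    simp
  have hDcard : (X.filter (fun x => pdeg P x = 1)).card = M.card := by
    symm
    apply Finset.card_bij (fun e he => (hMXY e he).choose)
    · intro e he
      obtain ⟨ha, b, hb, hee⟩ := (hMXY e he).choose_spec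
      rw [Finset.mem_filter]
      refine ⟨ha, ?_⟩
      rw [hXdeg _ ha]
      exact count_eq_one hM.2 ⟨e, he, mem_of_eq_mk_left hee⟩
    · intro e1 h1 e2 h2 heq
      obtain ⟨ha1, b1, hb1, he1⟩ := (hMXY e1 h1).choose_spec
      obtain ⟨ha2, b2, hb2, he2⟩ := (hMXY e2 h2).choose_spec
      by_contra hne
      exact hM.2 (Finset.mem_coe.mpr h1) (Finset.mem_coe.mpr h2) hne ((hMXY e1 h1).choose)
        ⟨mem_of_eq_mk_left he1, mem_of_eq_mk_left (x := (hMXY e1 h1).choose)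
          (by rw [heq]; exact he2)⟩
    · intro x hx
      rw [Finset.mem_filter] at hx
      have h1 := hx.2
      rw [hXdeg _ hx.1] at h1
      obtain ⟨e, he⟩ := Finset.card_pos.mp (by omega : 0 < (M.filter (fun e => x ∈ e)).card)
      rw [Finset.mem_filter] at he
      refine ⟨e, he.1, ?_⟩
      obtain ⟨ha, b, hb, hee⟩ := (hMXY e he.1).choose_spec
      have hmem := he.2
      rw [hee, Sym2.mem_iff] at hmem
      rcases hmem with h | h
      · exact h.symm
      · exact absurd (Finset.disjoint_left.mp hXY hx.1 (h ▸ hb)) (fun c => c)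
  have hDeven : Even ((X.filter (fun x => pdeg P x = 1)).card) := hDcard ▸ hMeven
  obtain ⟨x, hx, y, hy, dx, dy, hr⟩ := hxy
  refine ⟨P, hPS, hc1, hc2, by rw [hc3, Set.ncard_coe_finset, hScard], ?_⟩
  exact parity_upgrade P hPS.1 hPS.2 X Y hXY hcover hDeven hx hy dx dy hr

end ExtAux

open ExtAux SimpleGraph

/-- Extending a non-empty even matching between `X` and `Y` by a matching inside `Y`
and one further edge, to obtain a path system with two `XY`-paths. -/
theorem extend_matching_two_paths {V : Type*} [Fintype V] [DecidableEq V]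
    (G : SimpleGraph V) (X Y : Finset V)
    (hXY : Disjoint X Y) (hcover : X ∪ Y = Finset.univ)
    (ℓ : ℕ) (M' : Finset (Sym2 V)) (hM' : IsMatchingIn G M')
    (hM'Y : ∀ e ∈ M', ∀ v ∈ e, v ∈ Y) (hM'card : M'.card = ℓ + 1)
    (u v : V) (huv : G.Adj u v) (hu : u ∈ Y) (hv : v ∈ Y)
    (huM' : ∀ e ∈ M', u ∉ e)
    (m : ℕ) (M : Finset (Sym2 V)) (hM : IsMatchingIn G M)
    (hMXY : ∀ e ∈ M, ∃ a ∈ X, ∃ b ∈ Y, e = s(a, b))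
    (hMcard : M.card = m) (hMne : M.Nonempty) (hMeven : Even m) :
    ∃ P : SimpleGraph V, IsPathSystem P ∧
      ({e ∈ P.edgeSet | ∃ a ∈ X, ∃ b ∈ Y, e = s(a, b)} = (M : Set (Sym2 V))) ∧
      (P.edgeSet ⊆ (M : Set (Sym2 V)) ∪ (M' : Set (Sym2 V)) ∪ {s(u, v)}) ∧
      {e ∈ P.edgeSet | ∀ w ∈ e, w ∈ Y}.ncard = ℓ + 1 ∧
      HasTwoPathsBetween P X Y := by
  classical
  have hmemXY : ∀ z : V, z ∈ X → z ∈ Y → False := fun z hzX hzY =>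
    Finset.disjoint_left.mp hXY hzX hzY
  have hMnd : ∀ e ∈ M, ¬ e.IsDiag := fun e he => G.not_isDiag_of_mem_edgeSet (hM.1 he)
  have hM'nd : ∀ e ∈ M', ¬ e.IsDiag := fun e he => G.not_isDiag_of_mem_edgeSet (hM'.1 he)
  have huvnd : ¬ (s(u, v)).IsDiag := by
    rw [Sym2.mk_isDiag_iff]
    exact huv.ne
  have hMX : ∀ e ∈ M, ∃ a ∈ X, a ∈ e := by
    intro e he
    obtain ⟨a, ha, b, hb, rfl⟩ := hMXY e he
    exact ⟨a, ha, by simp⟩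
  have hM'notX : ∀ e ∈ M', ∀ a ∈ X, a ∉ e := fun e he a ha hae =>
    hmemXY a ha (hM'Y e he a hae)
  have hMM' : Disjoint M M' := by
    rw [Finset.disjoint_left]
    intro e heM heM'
    obtain ⟨a, ha, hae⟩ := hMX e heM
    exact hM'notX e heM' a ha hae
  have hH0nd : ∀ e ∈ M ∪ M', ¬ e.IsDiag := by
    intro e he
    rcases Finset.mem_union.mp he with h | h
    · exact hMnd e h
    · exact hM'nd e h
  set H0 : SimpleGraph V :=
    SimpleGraph.fromEdgeSet ((M ∪ M' : Finset (Sym2 V)) : Set (Sym2 V)) with hH0def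
  have hacH0 : H0.IsAcyclic := by
    rw [hH0def, Finset.coe_union]
    exact acyclic_union_matchings hXY (↑M) (↑M') hM.2 hM'.2
      (fun e he => hMX e (Finset.mem_coe.mp he))
      (fun e he => hM'Y e (Finset.mem_coe.mp he))
  have hH0deg : ∀ z, pdeg H0 z
      = (M.filter (fun e => z ∈ e)).card + (M'.filter (fun e => z ∈ e)).card := by
    intro z
    rw [hH0def, pdeg_fromEdgeSet _ hH0nd, Finset.filter_union,
      Finset.card_union_of_disjoint (Finset.disjoint_filter_filter hMM')]
  by_cases hR : ∃ x ∈ X, ∃ y ∈ Y, pdeg H0 x = 1 ∧ pdeg H0 y = 1 ∧ H0.Reachable x y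
  · -- Case A : take S = M'
    refine key G X Y hXY hcover ℓ M' u v M hM hMXY (hMcard ▸ hMeven) M' hM'nd hM'Y hM'card
      Set.subset_union_left ⟨?_, hacH0⟩ hR
    intro z
    rw [hH0deg z]
    exact add_le_add (count_le_one hM.2 z) (count_le_one hM'.2 z)
  · -- Case B
    push_neg at hR
    have hmate : ∀ z, z ∈ Y → (∃ e ∈ M, z ∈ e) → ∃ e' ∈ M', z ∈ e' := by
      intro z hzY hex
      by_contra hno
      push_neg at hno
      obtain ⟨e, he, hze⟩ := hex
      obtain ⟨a, ha, b, hb, heq⟩ := hMXY e he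
      have hzb : z = b := by
        have hm := hze
        rw [heq, Sym2.mem_iff] at hm
        rcases hm with rfl | rfl
        · exact absurd hzY (fun hh => hmemXY z ha hh)
        · rfl
      subst hzb
      have hdz : pdeg H0 z = 1 := by
        rw [hH0deg, count_eq_one hM.2 ⟨e, he, hze⟩, count_eq_zero hno]
      have hda : pdeg H0 a = 1 := by
        rw [hH0deg, count_eq_one hM.2 ⟨e, he, mem_of_eq_mk_left heq⟩,
          count_eq_zero (fun e' he' => hM'notX e' he' a ha)]
      have hadj : H0.Adj a z := by
        rw [hH0def, SimpleGraph.fromEdgeSet_adj]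
        exact ⟨Finset.mem_coe.mpr (Finset.mem_union_left _ (heq ▸ he)),
          fun hh => hmemXY a ha (hh ▸ hzY)⟩
      exact hR a ha z hzY hda hdz hadj.reachable
    have huMedge : ∀ e ∈ M, u ∉ e := by
      intro e he hue
      obtain ⟨e', he', hue'⟩ := hmate u hu ⟨e, he, hue⟩
      exact huM' e' he' hue'
    -- generic facts about S = M'.erase f ∪ {s(u,v)} for f ∈ M'
    have hgen : ∀ f ∈ M',
        (∀ e ∈ M'.erase f ∪ {s(u, v)}, ¬ e.IsDiag) ∧
        (∀ e ∈ M'.erase f ∪ {s(u, v)}, ∀ z ∈ e, z ∈ Y) ∧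
        ((M'.erase f ∪ {s(u, v)}).card = ℓ + 1) ∧
        ((↑(M'.erase f ∪ {s(u, v)}) : Set (Sym2 V)) ⊆ (↑M' : Set (Sym2 V)) ∪ {s(u, v)}) ∧
        (SimpleGraph.fromEdgeSet
          ((M ∪ (M'.erase f ∪ {s(u, v)}) : Finset (Sym2 V)) : Set (Sym2 V))).IsAcyclic ∧
        (∀ z, pdeg (SimpleGraph.fromEdgeSet
            ((M ∪ (M'.erase f ∪ {s(u, v)}) : Finset (Sym2 V)) : Set (Sym2 V))) z
          = (M.filter (fun e => z ∈ e)).card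
            + (((M'.erase f).filter (fun e => z ∈ e)).card
              + (({s(u, v)} : Finset (Sym2 V)).filter (fun e => z ∈ e)).card)) := by
      intro f hf
      have huvM : s(u, v) ∉ M := fun h => huMedge _ h (by simp)
      have huvE : s(u, v) ∉ M'.erase f := fun h => huM' _ (Finset.mem_of_mem_erase h) (by simp)
      have hMM'' : Disjoint M (M'.erase f) :=
        Finset.disjoint_of_subset_right (Finset.erase_subset _ _) hMM'
      have hMS : Disjoint M (M'.erase f ∪ {s(u, v)}) :=
        Finset.disjoint_union_right.mpr ⟨hMM'', Finset.disjoint_singleton_right.mpr huvM⟩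
      have hES' : Disjoint (M'.erase f) ({s(u, v)} : Finset (Sym2 V)) :=
        Finset.disjoint_singleton_right.mpr huvE
      have hSnd : ∀ e ∈ M'.erase f ∪ {s(u, v)}, ¬ e.IsDiag := by
        intro e he
        rcases Finset.mem_union.mp he with h | h
        · exact hM'nd e (Finset.mem_of_mem_erase h)
        · rw [Finset.mem_singleton.mp h]
          exact huvnd
      have hSY : ∀ e ∈ M'.erase f ∪ {s(u, v)}, ∀ z ∈ e, z ∈ Y := by
        intro e he z hz
        rcases Finset.mem_union.mp he with h | h
        · exact hM'Y e (Finset.mem_of_mem_erase h) z hz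
        · rw [Finset.mem_singleton.mp h, Sym2.mem_iff] at hz
          rcases hz with rfl | rfl
          · exact hu
          · exact hv
      have hScard : (M'.erase f ∪ {s(u, v)}).card = ℓ + 1 := by
        rw [Finset.card_union_of_disjoint hES', Finset.card_erase_of_mem hf, hM'card]
        simp
      have hSsub : (↑(M'.erase f ∪ {s(u, v)}) : Set (Sym2 V))
          ⊆ (↑M' : Set (Sym2 V)) ∪ {s(u, v)} := by
        intro e he
        rcases Finset.mem_union.mp (Finset.mem_coe.mp he) with h | h
        · exact Or.inl (Finset.mem_coe.mpr (Finset.mem_of_mem_erase h))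
        · exact Or.inr (Finset.mem_singleton.mp h)
      have hFnd : ∀ e ∈ M ∪ (M'.erase f ∪ {s(u, v)}), ¬ e.IsDiag := by
        intro e he
        rcases Finset.mem_union.mp he with h | h
        · exact hMnd e h
        · exact hSnd e h
      have hsetEq : ((M ∪ (M'.erase f ∪ {s(u, v)}) : Finset (Sym2 V)) : Set (Sym2 V))
          = ((M ∪ M'.erase f : Finset (Sym2 V)) : Set (Sym2 V)) ∪ {s(u, v)} := by
        rw [Finset.coe_union, Finset.coe_union, Finset.coe_singleton, Finset.coe_union,
          Set.union_assoc]
      have hacQ : (SimpleGraph.fromEdgeSet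
          ((M ∪ M'.erase f : Finset (Sym2 V)) : Set (Sym2 V))).IsAcyclic := by
        refine acyclic_mono (SimpleGraph.fromEdgeSet_mono ?_) hacH0
        rw [Finset.coe_subset]
        exact Finset.union_subset_union_right (Finset.erase_subset _ _)
      have hiso : ∀ e ∈ ((M ∪ M'.erase f : Finset (Sym2 V)) : Set (Sym2 V)), u ∉ e := by
        intro e he
        rcases Finset.mem_union.mp (Finset.mem_coe.mp he) with h | h
        · exact huMedge e h
        · exact huM' e (Finset.mem_of_mem_erase h)
      have hacP : (SimpleGraph.fromEdgeSet
          ((M ∪ (M'.erase f ∪ {s(u, v)}) : Finset (Sym2 V)) : Set (Sym2 V))).IsAcyclic := by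
        rw [hsetEq]
        exact acyclic_pendant _ hacQ u v huv.ne hiso
      refine ⟨hSnd, hSY, hScard, hSsub, hacP, ?_⟩
      intro z
      rw [pdeg_fromEdgeSet _ hFnd, Finset.filter_union,
        Finset.card_union_of_disjoint (Finset.disjoint_filter_filter hMS),
        Finset.filter_union,
        Finset.card_union_of_disjoint (Finset.disjoint_filter_filter hES')]
    -- count at u and generic bounds
    have hcU_le : ∀ z, (({s(u, v)} : Finset (Sym2 V)).filter (fun e => z ∈ e)).card ≤ 1 :=
      fun z => le_trans (Finset.card_filter_le _ _) (by simp)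
    have hcUu : (({s(u, v)} : Finset (Sym2 V)).filter (fun e => u ∈ e)).card = 1 := by
      rw [Finset.filter_singleton, if_pos (by simp)]
      simp
    have hcU_zero : ∀ z, z ∉ s(u, v) →
        (({s(u, v)} : Finset (Sym2 V)).filter (fun e => z ∈ e)).card = 0 := by
      intro z hz
      exact count_eq_zero (fun e he => by rw [Finset.mem_singleton.mp he]; exact hz)
    have hcMu : (M.filter (fun e => u ∈ e)).card = 0 := count_eq_zero huMedge
    have hcE_le : ∀ (f : Sym2 V) z, ((M'.erase f).filter (fun e => z ∈ e)).card ≤ 1 :=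
      fun f z => count_le_one (hM'.2.mono (Finset.coe_subset.mpr (Finset.erase_subset _ _))) z
    have hcEu : ∀ f : Sym2 V, ((M'.erase f).filter (fun e => u ∈ e)).card = 0 :=
      fun f => count_eq_zero (fun e he => huM' e (Finset.mem_of_mem_erase he))
    have hXzero : ∀ f : Sym2 V, ∀ a ∈ X,
        ((M'.erase f).filter (fun e => a ∈ e)).card = 0 ∧
        (({s(u, v)} : Finset (Sym2 V)).filter (fun e => a ∈ e)).card = 0 := by
      intro f a ha
      constructor
      · exact count_eq_zero (fun e he => hM'notX e (Finset.mem_of_mem_erase he) a ha)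
      · refine hcU_zero a ?_
        rw [Sym2.mem_iff]
        rintro (rfl | rfl)
        · exact hmemXY a ha hu
        · exact hmemXY a ha hv
    by_cases hvM : ∃ e ∈ M, v ∈ e
    · -- Case B-α : v is covered by M, hence by M'
      obtain ⟨ev, hev, hvev⟩ := hvM
      obtain ⟨a, ha, b, hb, heqv⟩ := hMXY ev hev
      have hvb : v = b := by
        have hm := hvev
        rw [heqv, Sym2.mem_iff] at hm
        rcases hm with rfl | rfl
        · exact absurd hv (fun hh => hmemXY v ha hh)
        · rfl
      subst hvb
      obtain ⟨g, hg, hvg⟩ := hmate v hv ⟨ev, hev, hvev⟩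
      obtain ⟨hSnd, hSY, hScard, hSsub, hacP, hpdegP⟩ := hgen g hg
      have hcEv : ((M'.erase g).filter (fun e => v ∈ e)).card = 0 := by
        refine count_eq_zero ?_
        intro e he hve
        exact (Finset.mem_erase.mp he).1
          (by
            by_contra hne
            exact hM'.2 (Finset.mem_coe.mpr (Finset.mem_of_mem_erase he))
              (Finset.mem_coe.mpr hg) hne v ⟨hve, hvg⟩)
      refine key G X Y hXY hcover ℓ M' u v M hM hMXY (hMcard ▸ hMeven)
        (M'.erase g ∪ {s(u, v)}) hSnd hSY hScard hSsub ⟨?_, hacP⟩ ?_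
      · -- degree bound
        intro z
        rw [hpdegP z]
        have h1 := count_le_one hM.2 z
        have h2 := hcE_le g z
        have h3 := hcU_le z
        by_cases hz : z ∈ s(u, v)
        · rcases Sym2.mem_iff.mp hz with rfl | rfl
          · rw [hcMu, hcEu g]
            omega
          · rw [hcEv]
            omega
        · rw [hcU_zero z hz]
          omega
      · -- x = a, y = u
        have hda : pdeg (SimpleGraph.fromEdgeSet
            ((M ∪ (M'.erase g ∪ {s(u, v)}) : Finset (Sym2 V)) : Set (Sym2 V))) a = 1 := by
          rw [hpdegP a, count_eq_one hM.2 ⟨ev, hev, mem_of_eq_mk_left heqv⟩,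
            (hXzero g a ha).1, (hXzero g a ha).2]
        have hdu : pdeg (SimpleGraph.fromEdgeSet
            ((M ∪ (M'.erase g ∪ {s(u, v)}) : Finset (Sym2 V)) : Set (Sym2 V))) u = 1 := by
          rw [hpdegP u, hcMu, hcEu g, hcUu]
        have hadj1 : (SimpleGraph.fromEdgeSet
            ((M ∪ (M'.erase g ∪ {s(u, v)}) : Finset (Sym2 V)) : Set (Sym2 V))).Adj a v := by
          rw [SimpleGraph.fromEdgeSet_adj]
          exact ⟨Finset.mem_coe.mpr (Finset.mem_union_left _ (heqv ▸ hev)),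
            fun hh => hmemXY a ha (hh ▸ hv)⟩
        have hadj2 : (SimpleGraph.fromEdgeSet
            ((M ∪ (M'.erase g ∪ {s(u, v)}) : Finset (Sym2 V)) : Set (Sym2 V))).Adj v u := by
          rw [SimpleGraph.fromEdgeSet_adj, Sym2.eq_swap]
          refine ⟨Finset.mem_coe.mpr (Finset.mem_union_right _
            (Finset.mem_union_right _ (Finset.mem_singleton_self _))), huv.ne.symm⟩
        exact ⟨a, ha, u, hu, hda, hdu, hadj1.reachable.trans hadj2.reachable⟩
    · -- Case B-β : v is not covered by M
      push_neg at hvM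
      obtain ⟨e1, he1⟩ := hMne
      obtain ⟨a1, ha1, b1, hb1, he1eq⟩ := hMXY e1 he1
      obtain ⟨f1, hf1, hb1f1⟩ := hmate b1 hb1 ⟨e1, he1, mem_of_eq_mk_right he1eq⟩
      obtain ⟨hSnd, hSY, hScard, hSsub, hacP, hpdegP⟩ := hgen f1 hf1
      have hcMv : (M.filter (fun e => v ∈ e)).card = 0 := count_eq_zero hvM
      refine key G X Y hXY hcover ℓ M' u v M hM hMXY (hMcard ▸ hMeven)
        (M'.erase f1 ∪ {s(u, v)}) hSnd hSY hScard hSsub ⟨?_, hacP⟩ ?_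
      · intro z
        rw [hpdegP z]
        have h1 := count_le_one hM.2 z
        have h2 := hcE_le f1 z
        have h3 := hcU_le z
        by_cases hz : z ∈ s(u, v)
        · rcases Sym2.mem_iff.mp hz with rfl | rfl
          · rw [hcMu, hcEu f1]
            omega
          · rw [hcMv]
            omega
        · rw [hcU_zero z hz]
          omega
      · -- x = a1, y = b1
        have hb1e1 : b1 ∈ e1 := mem_of_eq_mk_right he1eq
        have hda : pdeg (SimpleGraph.fromEdgeSet
            ((M ∪ (M'.erase f1 ∪ {s(u, v)}) : Finset (Sym2 V)) : Set (Sym2 V))) a1 = 1 := by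
          rw [hpdegP a1, count_eq_one hM.2 ⟨e1, he1, mem_of_eq_mk_left he1eq⟩,
            (hXzero f1 a1 ha1).1, (hXzero f1 a1 ha1).2]
        have hcEb1 : ((M'.erase f1).filter (fun e => b1 ∈ e)).card = 0 := by
          refine count_eq_zero ?_
          intro e he hbe
          exact (Finset.mem_erase.mp he).1
            (by
              by_contra hne
              exact hM'.2 (Finset.mem_coe.mpr (Finset.mem_of_mem_erase he))
                (Finset.mem_coe.mpr hf1) hne b1 ⟨hbe, hb1f1⟩)
        have hcUb1 : (({s(u, v)} : Finset (Sym2 V)).filter (fun e => b1 ∈ e)).card = 0 := by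
          refine hcU_zero b1 ?_
          rw [Sym2.mem_iff]
          rintro (rfl | rfl)
          · exact huMedge e1 he1 hb1e1
          · exact hvM e1 he1 hb1e1
        have hdb : pdeg (SimpleGraph.fromEdgeSet
            ((M ∪ (M'.erase f1 ∪ {s(u, v)}) : Finset (Sym2 V)) : Set (Sym2 V))) b1 = 1 := by
          rw [hpdegP b1, count_eq_one hM.2 ⟨e1, he1, hb1e1⟩, hcEb1, hcUb1]
        have hadj : (SimpleGraph.fromEdgeSet
            ((M ∪ (M'.erase f1 ∪ {s(u, v)}) : Finset (Sym2 V)) : Set (Sym2 V))).Adj a1 b1 := by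
          rw [SimpleGraph.fromEdgeSet_adj]
          exact ⟨Finset.mem_coe.mpr (Finset.mem_union_left _ (he1eq ▸ he1)),
            fun hh => hmemXY a1 ha1 (hh ▸ hb1)⟩
        exact ⟨a1, ha1, b1, hb1, hda, hdb, hadj.reachable⟩
end

section
/- Let Δ' ∈ ℕ and let ℓ, m, r be non-negative integers with Δ' ≥ 3ℓ + m. Let G be a graph whose vertex set is partitioned into X and Y, and let M be a matching of size m consisting of edges between X and Y. Let x1, …, xℓ be distinct vertices of Y such that each xi has at least Δ' neighbours in Y, and such that at least r of the xi are not covered by M. Then there exists a path system P, all of whose edges lie between X and Y or inside Y, such that P has exactly ℓ + r edges inside Y, the edges of P between X and Y are exactly M, and every edge of M lies in a distinct path of P having one endpoint in X and one endpoint in Y. -/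
/-- The number of neighbours of `x` lying in `S`. -/
noncomputable def dS {V : Type*} (G : SimpleGraph V) (x : V) (S : Finset V) : ℕ :=
  {y | y ∈ S ∧ G.Adj x y}.ncard

lemma greedy {V : Type*} [DecidableEq V] (s : Finset V) (A : V → Finset V) (need : V → ℕ) :
    ∀ B : Finset V,
    (∀ t ∈ s, (∑ u ∈ s, need u) ≤ ((A t) \ B).card) →
    ∃ C : V → Finset V, (∀ t ∈ s, C t ⊆ A t \ B ∧ (C t).card = need t) ∧
      (∀ t ∈ s, ∀ u ∈ s, t ≠ u → Disjoint (C t) (C u)) := by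
  induction s using Finset.induction_on with
  | empty => intro B _; exact ⟨fun _ => ∅, by simp, by simp⟩
  | @insert a s ha ih =>
    intro B hB
    have hsum := hB a (Finset.mem_insert_self a s)
    rw [Finset.sum_insert ha] at hsum
    obtain ⟨D, hDsub, hDcard⟩ := Finset.exists_subset_card_eq
      (le_trans (Nat.le_add_right _ _) hsum)
    obtain ⟨C', hC'1, hC'2⟩ := ih (B ∪ D) (by
      intro t ht
      have h1 := hB t (Finset.mem_insert_of_mem ht)
      rw [Finset.sum_insert ha] at h1
      have h2 : A t \ (B ∪ D) = (A t \ B) \ D := by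
        ext x; simp [Finset.mem_sdiff, Finset.mem_union]; tauto
      have h3 := Finset.le_card_sdiff D (A t \ B)
      rw [h2]
      omega)
    refine ⟨fun u => if u = a then D else C' u, ?_, ?_⟩
    · intro t ht
      by_cases hta : t = a
      · subst hta; simp [hDsub, hDcard]
      · have ht : t ∈ s := (Finset.mem_insert.mp ht).resolve_left hta
        simp only [if_neg hta]
        refine ⟨(hC'1 t ht).1.trans ?_, (hC'1 t ht).2⟩
        exact Finset.sdiff_subset_sdiff le_rfl Finset.subset_union_left
    · have hDdisj : ∀ u ∈ s, Disjoint D (C' u) := by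
        intro u hu
        refine Finset.disjoint_left.mpr fun x hx hx' => ?_
        have h5 := (hC'1 u hu).1 hx'
        simp only [Finset.mem_sdiff, Finset.mem_union] at h5
        exact h5.2 (Or.inr hx)
      intro t ht u hu htu
      by_cases hta : t = a <;> by_cases hua : u = a
      · exact absurd (hta.trans hua.symm) htu
      · subst hta
        simp only [if_pos rfl, if_neg hua]
        exact hDdisj u ((Finset.mem_insert.mp hu).resolve_left hua)
      · subst hua
        simp only [if_pos rfl, if_neg hta]
        exact (hDdisj t ((Finset.mem_insert.mp ht).resolve_left hta)).symm
      · simp only [if_neg hta, if_neg hua]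
        exact hC'2 t ((Finset.mem_insert.mp ht).resolve_left hta)
          u ((Finset.mem_insert.mp hu).resolve_left hua) htu

lemma two_le_pdeg {V : Type*} [Fintype V] (P : SimpleGraph V) {u a b : V}
    (hab : a ≠ b) (h1 : P.Adj u a) (h2 : P.Adj u b) : 2 ≤ pdeg P u := by
  have hsub : ({a, b} : Set V) ⊆ {x | P.Adj u x} := by
    intro x hx; rcases hx with rfl | rfl; exacts [h1, h2]
  calc 2 = ({a, b} : Set V).ncard := (Set.ncard_pair hab).symm
    _ ≤ _ := Set.ncard_le_ncard hsub (Set.toFinite _)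

lemma acyclic_of_deg {V : Type*} [Fintype V] (P : SimpleGraph V)
    (h : ∀ u w, P.Adj u w → pdeg P u ≤ 1 ∨ pdeg P w ≤ 1) : P.IsAcyclic := by
  intro v c hc
  have h3 := hc.three_le_length
  have hnd := hc.support_nodup
  cases c with
  | nil => simp at h3
  | @cons _ u₁ _ h₁ c₁ =>
    cases c₁ with
    | nil => simp at h3
    | @cons _ u₂ _ h₂ c₂ =>
      cases c₂ with
      | nil => simp at h3
      | @cons _ u₃ _ h₃ c₃ =>
        simp only [SimpleGraph.Walk.support_cons, List.tail_cons, List.nodup_cons] at hnd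
        -- hnd : u₁ ∉ u₂ :: (cons h₃ c₃).support ∧ ((cons ..).support).Nodup ?
        obtain ⟨hu₁, hu₂, _⟩ := hnd
        simp only [SimpleGraph.Walk.support_cons, List.mem_cons] at hu₁ hu₂
        have hvne : u₂ ≠ v := fun he => hu₂ (he ▸ SimpleGraph.Walk.end_mem_support c₃)
        have hu13 : u₁ ≠ u₃ := fun he => hu₁ (Or.inr (he ▸ SimpleGraph.Walk.start_mem_support c₃))
        have d1 : 2 ≤ pdeg P u₁ := two_le_pdeg P (Ne.symm hvne) h₁.symm h₂
        have d2 : 2 ≤ pdeg P u₂ := two_le_pdeg P hu13 h₂.symm h₃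
        rcases h u₁ u₂ h₂ with h' | h' <;> omega


/-- Extending a matching `M` between `X` and `Y` using high-degree vertices of `Y`
into a path system in which every edge of `M` lies in a distinct `XY`-path. -/
theorem two_paths {V : Type*} [Fintype V] [DecidableEq V]
    (Δ' : ℕ) (hΔ' : 1 ≤ Δ') (ℓ m r : ℕ) (hbound : 3 * ℓ + m ≤ Δ')
    (G : SimpleGraph V) (X Y : Finset V)
    (hXY : Disjoint X Y) (hcover : X ∪ Y = Finset.univ)
    (M : Finset (Sym2 V)) (hM : IsMatchingIn G M)
    (hMXY : ∀ e ∈ M, ∃ a ∈ X, ∃ b ∈ Y, e = s(a, b)) (hMcard : M.card = m)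
    (T : Finset V) (hTY : T ⊆ Y) (hTcard : T.card = ℓ)
    (hTdeg : ∀ v ∈ T, Δ' ≤ dS G v Y)
    (hTr : r ≤ {v | v ∈ T ∧ ∀ e ∈ M, v ∉ e}.ncard) :
    ∃ P : SimpleGraph V, P ≤ G ∧ IsPathSystem P ∧
      (∀ e ∈ P.edgeSet, (∀ w ∈ e, w ∈ Y) ∨ (∃ a ∈ X, ∃ b ∈ Y, e = s(a, b))) ∧
      {e ∈ P.edgeSet | ∀ w ∈ e, w ∈ Y}.ncard = ℓ + r ∧
      ({e ∈ P.edgeSet | ∃ a ∈ X, ∃ b ∈ Y, e = s(a, b)} = (M : Set (Sym2 V))) ∧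
      (∀ e ∈ M, ∃ x ∈ X, ∃ y ∈ Y, pdeg P x = 1 ∧ pdeg P y = 1 ∧
        P.Reachable x y ∧ ∀ a ∈ e, P.Reachable a x) ∧
      (∀ e ∈ M, ∀ f ∈ M, e ≠ f → ∀ a ∈ e, ∀ b ∈ f, ¬ P.Reachable a b) := by
  classical
  choose xe hxeX ye hyeY hexy using hMXY
  have hXnY : ∀ v ∈ X, v ∉ Y := fun v hv => Finset.disjoint_left.mp hXY hv
  have hxe_mem : ∀ e (he : e ∈ M), xe e he ∈ e := by
    intro e he
    have h : xe e he ∈ s(xe e he, ye e he) := by simp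
    rwa [← hexy e he] at h
  have hye_mem : ∀ e (he : e ∈ M), ye e he ∈ e := by
    intro e he
    have h : ye e he ∈ s(xe e he, ye e he) := by simp
    rwa [← hexy e he] at h
  have hmem_e : ∀ e (he : e ∈ M), ∀ v ∈ e, v = xe e he ∨ v = ye e he := by
    intro e he v hv; rw [hexy e he] at hv; exact Sym2.mem_iff.mp hv
  have huniq : ∀ e (he : e ∈ M), ∀ f (hf : f ∈ M), ∀ v, v ∈ e → v ∈ f → e = f := by
    intro e he f hf v hv hw
    by_contra hne
    exact hM.2 (Finset.mem_coe.mpr he) (Finset.mem_coe.mpr hf) hne v ⟨hv, hw⟩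
  -- Y-endpoints of M
  set YM := Y.filter (fun v => ∃ e ∈ M, v ∈ e) with hYMdef
  have hYMcard : YM.card ≤ m := by
    rw [← hMcard]
    apply Finset.card_le_card_of_injOn
      (fun v => if h : ∃ e ∈ M, v ∈ e then h.choose else s(v, v))
    · intro v hv
      rw [hYMdef, Finset.mem_coe, Finset.mem_filter] at hv
      beta_reduce; rw [dif_pos hv.2]
      exact hv.2.choose_spec.1
    · intro v hv v' hv' heq
      rw [hYMdef, Finset.mem_coe, Finset.mem_filter] at hv hv'
      dsimp only at heq
      rw [dif_pos hv.2, dif_pos hv'.2] at heq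
      obtain ⟨he, hvm⟩ := hv.2.choose_spec
      obtain ⟨he', hvm'⟩ := hv'.2.choose_spec
      rw [heq] at hvm
      rcases hmem_e _ he' v hvm with h1 | h1 <;>
        rcases hmem_e _ he' v' hvm' with h2 | h2
      · exact h1.trans h2.symm
      · exact absurd (h1 ▸ hv.1) (hXnY _ (hxeX _ he'))
      · exact absurd (h2 ▸ hv'.1) (hXnY _ (hxeX _ he'))
      · exact h1.trans h2.symm
  -- uncovered vertices of T, and the set R
  set U := T.filter (fun v => ∀ e ∈ M, v ∉ e) with hUdef
  have hrU : r ≤ U.card := by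
    have h : {v | v ∈ T ∧ ∀ e ∈ M, v ∉ e} = ↑U := by
      ext v; simp [hUdef]
    rwa [h, Set.ncard_coe_finset] at hTr
  obtain ⟨R, hRU, hRcard⟩ := Finset.exists_subset_card_eq hrU
  have hRT : R ⊆ T := hRU.trans (Finset.filter_subset _ _)
  have hRuncov : ∀ t ∈ R, ∀ e ∈ M, t ∉ e := fun t ht =>
    (Finset.mem_filter.mp (hRU ht)).2
  have hrl : r ≤ ℓ := by
    rw [← hRcard, ← hTcard]; exact Finset.card_le_card hRT
  -- the greedy choice
  set need : V → ℕ := fun t => if t ∈ R then 2 else 1 with hneeddef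
  have hneedpos : ∀ t, 1 ≤ need t := by
    intro t; by_cases h : t ∈ R <;> simp [hneeddef, h]
  have hneedle : ∀ t, need t ≤ 2 := by
    intro t; by_cases h : t ∈ R <;> simp [hneeddef, h]
  have hsumneed : ∑ t ∈ T, need t = ℓ + r := by
    rw [← Finset.sum_filter_add_sum_filter_not T (· ∈ R)]
    have h1 : T.filter (· ∈ R) = R := by
      ext x
      simp only [Finset.mem_filter]
      exact ⟨fun h => h.2, fun h => ⟨hRT h, h⟩⟩
    have h2 : T.filter (fun x => ¬ x ∈ R) = T \ R := (Finset.sdiff_eq_filter T R).symm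
    rw [h1, h2]
    have h3 : ∑ x ∈ R, need x = 2 * r := by
      rw [Finset.sum_congr rfl (fun x hx => if_pos hx), Finset.sum_const, hRcard,
        smul_eq_mul, Nat.mul_comm]
    have h4 : ∑ x ∈ T \ R, need x = ℓ - r := by
      rw [Finset.sum_congr rfl (fun x hx => if_neg (Finset.mem_sdiff.mp hx).2),
        Finset.sum_const, Finset.card_sdiff_of_subset hRT, hRcard, hTcard, smul_eq_mul, Nat.mul_one]
    rw [h3, h4]; omega
  have hdS : ∀ v, dS G v Y = (Y.filter (fun y => G.Adj v y)).card := by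
    intro v
    rw [dS, ← Set.ncard_coe_finset]
    congr 1
    ext y; simp
  have hbig : ∀ t ∈ T, (∑ u ∈ T, need u) ≤ ((Y.filter (fun y => G.Adj t y)) \ (T ∪ YM)).card := by
    intro t ht
    have h1 : Δ' ≤ (Y.filter (fun y => G.Adj t y)).card := by
      rw [← hdS]; exact hTdeg t ht
    have h2 := Finset.le_card_sdiff (T ∪ YM) (Y.filter (fun y => G.Adj t y))
    have h3 : (T ∪ YM).card ≤ ℓ + m := by
      calc (T ∪ YM).card ≤ T.card + YM.card := Finset.card_union_le _ _
        _ ≤ ℓ + m := by rw [hTcard]; omega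
    rw [hsumneed]; omega
  obtain ⟨C, hC, hCdisj⟩ := greedy T (fun t => Y.filter (fun y => G.Adj t y)) need
    (T ∪ YM) hbig
  have hCY : ∀ t ∈ T, ∀ y ∈ C t, y ∈ Y := by
    intro t ht y hy
    have := (hC t ht).1 hy
    exact (Finset.mem_filter.mp (Finset.mem_sdiff.mp this).1).1
  have hCadj : ∀ t ∈ T, ∀ y ∈ C t, G.Adj t y := by
    intro t ht y hy
    have := (hC t ht).1 hy
    exact (Finset.mem_filter.mp (Finset.mem_sdiff.mp this).1).2
  have hCnT : ∀ t ∈ T, ∀ y ∈ C t, y ∉ T := by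
    intro t ht y hy hyT
    have := (Finset.mem_sdiff.mp ((hC t ht).1 hy)).2
    exact this (Finset.mem_union_left _ hyT)
  have hCnM : ∀ t ∈ T, ∀ y ∈ C t, ∀ e ∈ M, y ∉ e := by
    intro t ht y hy e he hye
    have h2 := (Finset.mem_sdiff.mp ((hC t ht).1 hy)).2
    exact h2 (Finset.mem_union_right _ (by
      rw [hYMdef, Finset.mem_filter]
      exact ⟨hCY t ht y hy, e, he, hye⟩))
  have hCne : ∀ t ∈ T, ∀ y ∈ C t, y ≠ t := by
    intro t ht y hy h
    exact hCnT t ht y hy (h ▸ ht)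
  have hCcard : ∀ t ∈ T, (C t).card = need t := fun t ht => (hC t ht).2
  -- the edge sets
  set EY : Finset (Sym2 V) := T.biUnion (fun t => (C t).image (fun y => s(t, y))) with hEYdef
  set E : Finset (Sym2 V) := M ∪ EY with hEdef
  have hmemEY : ∀ ee : Sym2 V, ee ∈ EY ↔ ∃ t ∈ T, ∃ y ∈ C t, ee = s(t, y) := by
    intro ee
    rw [hEYdef, Finset.mem_biUnion]
    constructor
    · rintro ⟨t, ht, hee⟩
      obtain ⟨y, hy, hy2⟩ := Finset.mem_image.mp hee
      exact ⟨t, ht, y, hy, hy2.symm⟩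
    · rintro ⟨t, ht, y, hy, rfl⟩
      exact ⟨t, ht, Finset.mem_image.mpr ⟨y, hy, rfl⟩⟩
  have hmemE : ∀ ee : Sym2 V, ee ∈ E ↔ ee ∈ M ∨ ∃ t ∈ T, ∃ y ∈ C t, ee = s(t, y) := by
    intro ee
    rw [hEdef, Finset.mem_union, hmemEY]
  have hndiag : ∀ ee ∈ E, ¬ ee.IsDiag := by
    intro ee hee
    rcases (hmemE ee).mp hee with h | ⟨t, ht, y, hy, rfl⟩
    · rw [hexy ee h]
      simp only [Sym2.isDiag_iff_proj_eq]
      intro hd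
      exact hXnY _ (hxeX ee h) (hd ▸ hyeY ee h)
    · simp only [Sym2.isDiag_iff_proj_eq]
      exact fun hd => hCne t ht y hy hd.symm
  set P := SimpleGraph.fromEdgeSet (↑E : Set (Sym2 V)) with hPdef
  have hPadj : ∀ u w : V, P.Adj u w ↔ s(u, w) ∈ M ∨ ∃ t ∈ T, ∃ y ∈ C t, s(u, w) = s(t, y) := by
    intro u w
    rw [hPdef, SimpleGraph.fromEdgeSet_adj, ← hmemE]
    constructor
    · exact fun h => h.1
    · intro h
      refine ⟨h, fun hd => hndiag _ h ?_⟩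
      rw [hd]; simp [Sym2.isDiag_iff_proj_eq]
  have hPedge : P.edgeSet = ↑E := by
    rw [hPdef, SimpleGraph.edgeSet_fromEdgeSet]
    ext ee
    simp only [Set.mem_diff, Set.mem_setOf_eq, Finset.mem_coe]
    exact ⟨fun h => h.1, fun h => ⟨h, hndiag ee h⟩⟩
  have hPG : P ≤ G := by
    intro u w huw
    rcases (hPadj u w).mp huw with h | ⟨t, ht, y, hy, heq⟩
    · have h2 := hM.1 (Finset.mem_coe.mpr h)
      exact G.mem_edgeSet.mp h2
    · rcases Sym2.eq_iff.mp heq with ⟨h1, h2⟩ | ⟨h1, h2⟩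
      · subst h1; subst h2; exact hCadj _ ht _ hy
      · subst h1; subst h2; exact (hCadj _ ht _ hy).symm
  have hxyne : ∀ e (he : e ∈ M), xe e he ≠ ye e he := by
    intro e he h
    exact hXnY _ (hxeX e he) (h ▸ hyeY e he)
  have hMadj : ∀ e (he : e ∈ M), P.Adj (xe e he) (ye e he) := by
    intro e he
    rw [hPadj]
    left
    rw [← hexy e he]
    exact he
  have hsmem : ∀ a b : V, a ∈ s(a, b) ∧ b ∈ s(a, b) :=
    fun a b => ⟨Sym2.mem_iff.mpr (Or.inl rfl), Sym2.mem_iff.mpr (Or.inr rfl)⟩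
  -- neighbourhoods
  have hNx : ∀ e (he : e ∈ M), {u | P.Adj (xe e he) u} = {ye e he} := by
    intro e he
    ext u
    simp only [Set.mem_setOf_eq, Set.mem_singleton_iff]
    constructor
    · intro hadj
      rcases (hPadj _ u).mp hadj with h | ⟨t, ht, y, hy, heq⟩
      · have he2 := huniq _ h _ he _ (hsmem _ _).1 (hxe_mem e he)
        have h3 : s(xe e he, u) = s(xe e he, ye e he) := he2.trans (hexy e he)
        rcases Sym2.eq_iff.mp h3 with ⟨h1, h2⟩ | ⟨h1, h2⟩
        · exact h2
        · exact absurd h1 (hxyne e he)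
      · rcases Sym2.eq_iff.mp heq with ⟨h1, h2⟩ | ⟨h1, h2⟩
        · exact absurd (h1 ▸ hTY ht) (hXnY _ (hxeX e he))
        · exact absurd (h1 ▸ hCY t ht y hy) (hXnY _ (hxeX e he))
    · rintro rfl
      exact hMadj e he
  have hNy : ∀ t (ht : t ∈ T), ∀ y (hy : y ∈ C t), {u | P.Adj y u} = {t} := by
    intro t ht y hy
    ext u
    simp only [Set.mem_setOf_eq, Set.mem_singleton_iff]
    constructor
    · intro hadj
      rcases (hPadj _ u).mp hadj with h | ⟨t', ht', y', hy', heq⟩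
      · exact absurd (hsmem y u).1 (hCnM t ht y hy _ h)
      · rcases Sym2.eq_iff.mp heq with ⟨h1, h2⟩ | ⟨h1, h2⟩
        · exact absurd (h1 ▸ ht') (hCnT t ht y hy)
        · -- y = y' ∈ C t', u = t'
          subst h1
          have htt : t = t' := by
            by_contra htt
            exact (Finset.disjoint_left.mp (hCdisj t ht t' ht' htt) hy) hy'
          exact h2.trans htt.symm
    · intro h
      rw [hPadj]
      right
      exact ⟨t, ht, y, hy, by rw [h]; exact Sym2.eq_swap⟩
  have hNb : ∀ e (he : e ∈ M), ye e he ∉ T → {u | P.Adj (ye e he) u} = {xe e he} := by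
    intro e he hbT
    ext u
    simp only [Set.mem_setOf_eq, Set.mem_singleton_iff]
    constructor
    · intro hadj
      rcases (hPadj _ u).mp hadj with h | ⟨t, ht, y, hy, heq⟩
      · have he2 := huniq _ h _ he _ (hsmem _ _).1 (hye_mem e he)
        have h3 : s(ye e he, u) = s(xe e he, ye e he) := he2.trans (hexy e he)
        rcases Sym2.eq_iff.mp h3 with ⟨h1, h2⟩ | ⟨h1, h2⟩
        · exact absurd h1 (hxyne e he).symm
        · exact h2
      · rcases Sym2.eq_iff.mp heq with ⟨h1, h2⟩ | ⟨h1, h2⟩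
        · exact absurd (h1 ▸ ht) hbT
        · exact absurd (h1 ▸ hye_mem e he) (hCnM t ht y hy e he)
    · rintro rfl
      exact (hMadj e he).symm
  have hdeg1 : ∀ u, u ∉ T → pdeg P u ≤ 1 := by
    intro u hu
    by_cases h1 : ∃ e ∈ M, u ∈ e
    · obtain ⟨e, he, hue⟩ := h1
      rcases hmem_e e he u hue with rfl | rfl
      · rw [pdeg, hNx e he, Set.ncard_singleton]
      · rw [pdeg, hNb e he hu, Set.ncard_singleton]
    · by_cases h2 : ∃ t, ∃ (ht : t ∈ T), u ∈ C t
      · obtain ⟨t, ht, hut⟩ := h2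
        rw [pdeg, hNy t ht u hut, Set.ncard_singleton]
      · have hempty : {w | P.Adj u w} = ∅ := by
          ext w
          simp only [Set.mem_setOf_eq, Set.mem_empty_iff_false, iff_false]
          intro hadj
          rcases (hPadj u w).mp hadj with h | ⟨t, ht, y, hy, heq⟩
          · exact h1 ⟨_, h, (hsmem u w).1⟩
          · rcases Sym2.eq_iff.mp heq with ⟨hh1, hh2⟩ | ⟨hh1, hh2⟩
            · exact hu (hh1 ▸ ht)
            · exact h2 ⟨t, ht, hh1 ▸ hy⟩
        rw [pdeg, hempty, Set.ncard_empty]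
        omega
  have hdeg2 : ∀ u, pdeg P u ≤ 2 := by
    intro u
    by_cases hu : u ∈ T
    · by_cases hcov : ∃ e ∈ M, u ∈ e
      · obtain ⟨e, he, hue⟩ := hcov
        have hub : u = ye e he := by
          rcases hmem_e e he u hue with rfl | h
          · exact absurd (hTY hu) (hXnY _ (hxeX e he))
          · exact h
        have hsub : {w | P.Adj u w} ⊆ ↑(insert (xe e he) (C u)) := by
          intro w hadj
          simp only [Set.mem_setOf_eq] at hadj
          simp only [Finset.coe_insert, Set.mem_insert_iff, Finset.mem_coe]
          rcases (hPadj u w).mp hadj with h | ⟨t, ht, y, hy, heq⟩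
          · have he2 := huniq _ h _ he _ (hsmem _ _).1 hue
            have h3 : s(u, w) = s(xe e he, ye e he) := he2.trans (hexy e he)
            rcases Sym2.eq_iff.mp h3 with ⟨hh1, hh2⟩ | ⟨hh1, hh2⟩
            · exact absurd (hh1 ▸ hTY hu) (hXnY _ (hxeX e he))
            · exact Or.inl hh2
          · rcases Sym2.eq_iff.mp heq with ⟨hh1, hh2⟩ | ⟨hh1, hh2⟩
            · subst hh1; subst hh2; exact Or.inr hy
            · exact absurd (hh1 ▸ hu) (hCnT t ht y hy)
        calc pdeg P u ≤ (insert (xe e he) (C u)).card := by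
              rw [pdeg, ← Set.ncard_coe_finset]
              exact Set.ncard_le_ncard hsub (Set.toFinite _)
          _ ≤ (C u).card + 1 := Finset.card_insert_le _ _
          _ ≤ 2 := by
              rw [hCcard u hu]
              have hnR : u ∉ R := fun hR => hRuncov u hR e he hue
              rw [hneeddef]
              simp [hnR]
      · have hsub : {w | P.Adj u w} ⊆ ↑(C u) := by
          intro w hadj
          simp only [Set.mem_setOf_eq] at hadj
          simp only [Finset.mem_coe]
          rcases (hPadj u w).mp hadj with h | ⟨t, ht, y, hy, heq⟩
          · exact absurd ⟨_, h, (hsmem u w).1⟩ hcov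
          · rcases Sym2.eq_iff.mp heq with ⟨hh1, hh2⟩ | ⟨hh1, hh2⟩
            · subst hh1; subst hh2; exact hy
            · exact absurd (hh1 ▸ hu) (hCnT t ht y hy)
        calc pdeg P u ≤ (C u).card := by
              rw [pdeg, ← Set.ncard_coe_finset]
              exact Set.ncard_le_ncard hsub (Set.toFinite _)
          _ ≤ 2 := (hCcard u hu) ▸ hneedle u
    · exact (hdeg1 u hu).trans (by omega)
  have hacyc : P.IsAcyclic := by
    apply acyclic_of_deg
    intro u w hadj
    by_cases hu : u ∈ T
    · by_cases hw : w ∈ T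
      · exfalso
        rcases (hPadj u w).mp hadj with h | ⟨t, ht, y, hy, heq⟩
        · have h3 : s(u, w) = s(xe _ h, ye _ h) := hexy _ h
          rcases Sym2.eq_iff.mp h3 with ⟨h1, h2⟩ | ⟨h1, h2⟩
          · exact hXnY u (by rw [h1]; exact hxeX _ h) (hTY hu)
          · exact hXnY w (by rw [h2]; exact hxeX _ h) (hTY hw)
        · rcases Sym2.eq_iff.mp heq with ⟨h1, h2⟩ | ⟨h1, h2⟩
          · exact hCnT t ht y hy (h2 ▸ hw)
          · exact hCnT t ht y hy (h1 ▸ hu)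
      · exact Or.inr (hdeg1 w hw)
    · exact Or.inl (hdeg1 u hu)
  -- the component labelling
  obtain ⟨comp, hcompT, hcompC, hcompM⟩ :
      ∃ comp : V → V, (∀ t ∈ T, comp t = t) ∧
        (∀ t ∈ T, ∀ y ∈ C t, comp y = t) ∧
        (∀ e (he : e ∈ M), ∀ v ∈ e, comp v = ye e he) := by
    refine ⟨fun v =>
      if hv : v ∈ T then v
      else if h : ∃ t, t ∈ T ∧ v ∈ C t then h.choose
      else if h : ∃ e, e ∈ M ∧ v ∈ e then ye h.choose h.choose_spec.1
      else v, ?_, ?_, ?_⟩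
    · intro t ht; dsimp only; rw [dif_pos ht]
    · intro t ht y hy
      have hyT : y ∉ T := hCnT t ht y hy
      have hex : ∃ t', t' ∈ T ∧ y ∈ C t' := ⟨t, ht, hy⟩
      dsimp only
      rw [dif_neg hyT, dif_pos hex]
      have hspec := hex.choose_spec
      by_contra hne
      exact (Finset.disjoint_left.mp (hCdisj _ hspec.1 t ht hne) hspec.2) hy
    · intro e he v hv
      have key : ∀ (f : Sym2 V) (hf : f ∈ M), f = e → ye f hf = ye e he := by
        rintro f hf rfl; rfl
      rcases hmem_e e he v hv with h1 | h1
      · have hvX : v ∈ X := by rw [h1]; exact hxeX e he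
        have hvT : v ∉ T := fun hvT => hXnY v hvX (hTY hvT)
        have hvC : ¬ ∃ t, t ∈ T ∧ v ∈ C t := by
          rintro ⟨t, ht, hvt⟩
          exact hXnY v hvX (hCY t ht v hvt)
        have hex : ∃ f, f ∈ M ∧ v ∈ f := ⟨e, he, hv⟩
        dsimp only
        rw [dif_neg hvT, dif_neg hvC, dif_pos hex]
        exact key _ hex.choose_spec.1
          (huniq _ hex.choose_spec.1 _ he v hex.choose_spec.2 hv)
      · by_cases hvT : v ∈ T
        · dsimp only; rw [dif_pos hvT]; exact h1
        · have hvC : ¬ ∃ t, t ∈ T ∧ v ∈ C t := by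
            rintro ⟨t, ht, hvt⟩
            exact hCnM t ht v hvt e he hv
          have hex : ∃ f, f ∈ M ∧ v ∈ f := ⟨e, he, hv⟩
          dsimp only
          rw [dif_neg hvT, dif_neg hvC, dif_pos hex]
          exact key _ hex.choose_spec.1
            (huniq _ hex.choose_spec.1 _ he v hex.choose_spec.2 hv)
  have hcomp_adj : ∀ u w, P.Adj u w → comp u = comp w := by
    intro u w hadj
    rcases (hPadj u w).mp hadj with h | ⟨t, ht, y, hy, heq⟩
    · exact (hcompM _ h u (hsmem u w).1).trans (hcompM _ h w (hsmem u w).2).symm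
    · rcases Sym2.eq_iff.mp heq with ⟨h1, h2⟩ | ⟨h1, h2⟩
      · subst h1; subst h2
        exact (hcompT u ht).trans (hcompC u ht w hy).symm
      · subst h1; subst h2
        exact (hcompC w ht u hy).trans (hcompT w ht).symm
  have hreach : ∀ a b, P.Reachable a b → comp a = comp b := by
    intro a b h
    obtain ⟨p⟩ := h
    induction p with
    | nil => rfl
    | cons hadj p ih => exact (hcomp_adj _ _ hadj).trans ih
  -- assemble
  refine ⟨P, hPG, ⟨hdeg2, hacyc⟩, ?_, ?_, ?_, ?_, ?_⟩
  · intro ee hee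
    rw [hPedge, Finset.mem_coe] at hee
    rcases (hmemE ee).mp hee with h | ⟨t, ht, y, hy, rfl⟩
    · exact Or.inr ⟨xe ee h, hxeX ee h, ye ee h, hyeY ee h, hexy ee h⟩
    · left
      intro w hw
      rcases Sym2.mem_iff.mp hw with h | h
      · rw [h]; exact hTY ht
      · rw [h]; exact hCY t ht y hy
  · have hset : {e ∈ P.edgeSet | ∀ w ∈ e, w ∈ Y} = ↑EY := by
      ext ee
      simp only [Set.mem_setOf_eq, hPedge, Finset.mem_coe]
      constructor
      · rintro ⟨heeE, hall⟩
        rcases (hmemE ee).mp heeE with h | h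
        · exact absurd (hall _ (hxe_mem ee h)) (hXnY _ (hxeX ee h))
        · exact (hmemEY ee).mpr h
      · intro h
        obtain ⟨t, ht, y, hy, rfl⟩ := (hmemEY ee).mp h
        refine ⟨(hmemE _).mpr (Or.inr ⟨t, ht, y, hy, rfl⟩), ?_⟩
        intro w hw
        rcases Sym2.mem_iff.mp hw with h | h
        · rw [h]; exact hTY ht
        · rw [h]; exact hCY t ht y hy
    rw [hset, Set.ncard_coe_finset]
    have hdisjim : ∀ t ∈ T, ∀ t' ∈ T, t ≠ t' →
        Disjoint ((C t).image (fun y => s(t, y))) ((C t').image (fun y => s(t', y))) := by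
      intro t ht t' ht' htt
      rw [Finset.disjoint_left]
      rintro ee h1 h2
      obtain ⟨y, hy, rfl⟩ := Finset.mem_image.mp h1
      obtain ⟨y', hy', heq⟩ := Finset.mem_image.mp h2
      rcases Sym2.eq_iff.mp heq with ⟨h3, h4⟩ | ⟨h3, h4⟩
      · exact htt h3.symm
      · exact hCnT t' ht' y' hy' (h4 ▸ ht)
    rw [hEYdef, Finset.card_biUnion hdisjim, ← hsumneed]
    apply Finset.sum_congr rfl
    intro t ht
    rw [Finset.card_image_of_injOn, hCcard t ht]
    intro y hy y' hy' heq
    rcases Sym2.eq_iff.mp heq with ⟨h3, h4⟩ | ⟨h3, h4⟩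
    · exact h4
    · exact absurd h4 (hCne t ht y hy)
  · ext ee
    simp only [Set.mem_setOf_eq, hPedge, Finset.mem_coe]
    constructor
    · rintro ⟨heeE, a, haX, b, hbY, rfl⟩
      rcases (hmemE _).mp heeE with h | ⟨t, ht, y, hy, heq⟩
      · exact h
      · exfalso
        rcases Sym2.eq_iff.mp heq with ⟨h1, h2⟩ | ⟨h1, h2⟩
        · exact hXnY a haX (h1 ▸ hTY ht)
        · exact hXnY a haX (h1 ▸ hCY t ht y hy)
    · intro h
      exact ⟨(hmemE _).mpr (Or.inl h), xe ee h, hxeX ee h, ye ee h, hyeY ee h, hexy ee h⟩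
  · intro e he
    by_cases hbT : ye e he ∈ T
    · have hCne' : (C (ye e he)).Nonempty := by
        rw [← Finset.card_pos, hCcard _ hbT]
        exact hneedpos _
      obtain ⟨y0, hy0⟩ := hCne'
      refine ⟨xe e he, hxeX e he, y0, hCY _ hbT y0 hy0, ?_, ?_, ?_, ?_⟩
      · rw [pdeg, hNx e he, Set.ncard_singleton]
      · rw [pdeg, hNy _ hbT y0 hy0, Set.ncard_singleton]
      · have h1 : P.Adj (xe e he) (ye e he) := hMadj e he
        have h2 : P.Adj (ye e he) y0 := by
          rw [hPadj]; right; exact ⟨_, hbT, y0, hy0, rfl⟩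
        exact h1.reachable.trans h2.reachable
      · intro a ha
        rcases hmem_e e he a ha with h | h
        · rw [h]
        · rw [h]; exact (hMadj e he).symm.reachable
    · refine ⟨xe e he, hxeX e he, ye e he, hyeY e he, ?_, ?_, (hMadj e he).reachable, ?_⟩
      · rw [pdeg, hNx e he, Set.ncard_singleton]
      · rw [pdeg, hNb e he hbT, Set.ncard_singleton]
      · intro a ha
        rcases hmem_e e he a ha with h | h
        · rw [h]
        · rw [h]; exact (hMadj e he).symm.reachable
  · intro e he f hf hef a ha b hb hr
    have h1 := hcompM e he a ha
    have h2 := hcompM f hf b hb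
    have h3 := hreach a b hr
    have h4 : ye e he = ye f hf := by rw [← h1, ← h2]; exact h3
    refine hef (huniq e he f hf (ye e he) (hye_mem e he) ?_)
    rw [h4]; exact hye_mem f hf
end

section
/- Let D ∈ ℕ and 0 < ε < 1/3. Let G be a D-regular graph whose vertex set is partitioned into U, A, B with |A| ≥ |B|. Suppose that Δ(G[A,U]) ≤ D/2 and Δ(G[A]) ≤ D/2, and that char_{D/2,ε}(G) = (ℓ, m). Then ℓ ≥ 0, m ≥ 0 and ℓ + m/2 ≥ |A| − |B|. -/
/-- The number of edges of `G` with both endpoints in `S`. -/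
noncomputable def eIn {V : Type*} (G : SimpleGraph V) (S : Finset V) : ℕ :=
  {e ∈ G.edgeSet | ∀ v ∈ e, v ∈ S}.ncard

/-- The number of edges of `G` with one endpoint in `S` and the other in `T`
(for disjoint `S`, `T`). -/
noncomputable def eBtw {V : Type*} (G : SimpleGraph V) (S T : Finset V) : ℕ :=
  {e ∈ G.edgeSet | ∃ a ∈ S, ∃ b ∈ T, e = s(a, b)}.ncard

/-- `G` is `D`-regular: every vertex has degree exactly `D`. -/
def IsDRegular {V : Type*} (G : SimpleGraph V) (D : ℕ) : Prop :=
  ∀ v, pdeg G v = D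

/-- `char_{Δ,ε}(G) = (ℓ, m)` for a graph `G` with vertex partition `U, A, B`:
`ℓ = ⌈e(A)/Δ⌉_ε` and `m` is the largest even integer at most `⌈e(A,U)/Δ⌉_ε`,
where `⌈x⌉_ε = ⌈x - ε⌉`. -/
def CharEq {V : Type*} (G : SimpleGraph V) (Δ ε : ℝ) (U A : Finset V)
    (ℓ m : ℤ) : Prop :=
  ℓ = ⌈(eIn G A : ℝ) / Δ - ε⌉ ∧
  Even m ∧ m ≤ ⌈(eBtw G A U : ℝ) / Δ - ε⌉ ∧
  ∀ m' : ℤ, Even m' → m' ≤ ⌈(eBtw G A U : ℝ) / Δ - ε⌉ → m' ≤ m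

set_option linter.unusedSectionVars false
open Finset

section helpers
variable {V : Type*} [Fintype V] [DecidableEq V] (G : SimpleGraph V) [DecidableRel G.Adj]

lemma dS_eq_card (x : V) (S : Finset V) :
    dS G x S = (S.filter (fun y => G.Adj x y)).card := by
  rw [dS, ← Set.ncard_coe_finset]
  congr 1
  ext y
  simp [Finset.mem_filter]

lemma pdeg_eq_degree (v : V) : pdeg G v = G.degree v := by
  rw [pdeg, ← SimpleGraph.card_neighborFinset_eq_degree, ← Set.ncard_coe_finset]
  congr 1
  ext y
  simp [SimpleGraph.mem_neighborFinset]

lemma dS_sum_comm (S T : Finset V) : ∑ v ∈ S, dS G v T = ∑ v ∈ T, dS G v S := by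
  simp only [dS_eq_card, Finset.card_filter]
  rw [Finset.sum_comm]
  exact Finset.sum_congr rfl fun x _ => Finset.sum_congr rfl fun y _ => by
    simp [G.adj_comm]

def inGraph (A : Finset V) : SimpleGraph V where
  Adj x y := G.Adj x y ∧ x ∈ A ∧ y ∈ A
  symm := ⟨fun x y ⟨h, hx, hy⟩ => ⟨h.symm, hy, hx⟩⟩
  loopless := ⟨fun x ⟨h, _⟩ => G.irrefl h⟩

instance (A : Finset V) : DecidableRel (inGraph G A).Adj :=
  fun x y => inferInstanceAs (Decidable (G.Adj x y ∧ x ∈ A ∧ y ∈ A))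

lemma eIn_eq (A : Finset V) : eIn G A = (inGraph G A).edgeFinset.card := by
  rw [eIn, ← Set.ncard_coe_finset]
  congr 1
  rw [SimpleGraph.coe_edgeFinset]
  ext e
  induction e using Sym2.ind with
  | _ x y =>
    simp only [Set.mem_setOf_eq, SimpleGraph.mem_edgeSet, inGraph, Sym2.mem_iff]
    constructor
    · rintro ⟨h, hA⟩
      exact ⟨h, hA x (Or.inl rfl), hA y (Or.inr rfl)⟩
    · rintro ⟨h, hx, hy⟩
      refine ⟨h, ?_⟩
      rintro v (rfl | rfl) <;> assumption

lemma inGraph_degree (A : Finset V) (v : V) :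
    (inGraph G A).degree v = if v ∈ A then dS G v A else 0 := by
  rw [← SimpleGraph.card_neighborFinset_eq_degree]
  split_ifs with hv
  · rw [dS_eq_card]
    congr 1
    ext y
    rw [SimpleGraph.mem_neighborFinset]
    simp [inGraph, SimpleGraph.mem_neighborFinset, hv, and_comm]
  · rw [Finset.card_eq_zero]
    ext y
    rw [SimpleGraph.mem_neighborFinset]
    simp only [SimpleGraph.mem_neighborFinset, inGraph, Finset.notMem_empty, iff_false]
    rintro ⟨_, h, _⟩
    exact hv h

lemma twice_eIn (A : Finset V) : 2 * eIn G A = ∑ v ∈ A, dS G v A := by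
  rw [eIn_eq, ← SimpleGraph.sum_degrees_eq_twice_card_edges,
    ← Finset.sum_subset (Finset.subset_univ A)
      (fun x _ hx => by simp [inGraph_degree, hx])]
  exact Finset.sum_congr rfl fun v hv => by simp [inGraph_degree, hv]

def btwGraph (S T : Finset V) : SimpleGraph V where
  Adj x y := G.Adj x y ∧ ((x ∈ S ∧ y ∈ T) ∨ (x ∈ T ∧ y ∈ S))
  symm := ⟨fun x y ⟨h, h2⟩ => ⟨h.symm, h2.symm.imp And.symm And.symm⟩⟩
  loopless := ⟨fun x ⟨h, _⟩ => G.irrefl h⟩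

instance (S T : Finset V) : DecidableRel (btwGraph G S T).Adj :=
  fun x y => inferInstanceAs (Decidable (G.Adj x y ∧ ((x ∈ S ∧ y ∈ T) ∨ (x ∈ T ∧ y ∈ S))))

lemma eBtw_eq_card (S T : Finset V) : eBtw G S T = (btwGraph G S T).edgeFinset.card := by
  rw [eBtw, ← Set.ncard_coe_finset]
  congr 1
  rw [SimpleGraph.coe_edgeFinset]
  ext e
  induction e using Sym2.ind with
  | _ x y =>
    simp only [Set.mem_setOf_eq, SimpleGraph.mem_edgeSet, btwGraph]
    constructor
    · rintro ⟨h, a, ha, b, hb, he⟩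
      rw [Sym2.eq_iff] at he
      rcases he with ⟨rfl, rfl⟩ | ⟨rfl, rfl⟩
      · exact ⟨h, Or.inl ⟨ha, hb⟩⟩
      · exact ⟨h, Or.inr ⟨hb, ha⟩⟩
    · rintro ⟨h, ⟨hx, hy⟩ | ⟨hx, hy⟩⟩
      · exact ⟨h, x, hx, y, hy, rfl⟩
      · exact ⟨h, y, hy, x, hx, Sym2.eq_swap⟩

lemma btwGraph_degree (S T : Finset V) (hST : Disjoint S T) (v : V) :
    (btwGraph G S T).degree v =
      if v ∈ S then dS G v T else if v ∈ T then dS G v S else 0 := by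
  rw [← SimpleGraph.card_neighborFinset_eq_degree]
  split_ifs with hv hv'
  · rw [dS_eq_card]
    congr 1
    ext y
    rw [SimpleGraph.mem_neighborFinset]
    simp only [SimpleGraph.mem_neighborFinset, btwGraph, Finset.mem_filter]
    constructor
    · rintro ⟨h, ⟨_, hy⟩ | ⟨hv2, _⟩⟩
      · exact ⟨hy, h⟩
      · exact absurd hv2 (Finset.disjoint_left.mp hST hv)
    · rintro ⟨hy, h⟩
      exact ⟨h, Or.inl ⟨hv, hy⟩⟩
  · rw [dS_eq_card]
    congr 1
    ext y
    rw [SimpleGraph.mem_neighborFinset]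
    simp only [SimpleGraph.mem_neighborFinset, btwGraph, Finset.mem_filter]
    constructor
    · rintro ⟨h, ⟨hv2, _⟩ | ⟨_, hy⟩⟩
      · exact absurd hv2 hv
      · exact ⟨hy, h⟩
    · rintro ⟨hy, h⟩
      exact ⟨h, Or.inr ⟨hv', hy⟩⟩
  · rw [Finset.card_eq_zero]
    ext y
    rw [SimpleGraph.mem_neighborFinset]
    simp only [SimpleGraph.mem_neighborFinset, btwGraph, Finset.notMem_empty, iff_false]
    rintro ⟨_, ⟨h1, _⟩ | ⟨h1, _⟩⟩
    · exact hv h1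
    · exact hv' h1

lemma eBtw_eq_sum (S T : Finset V) (hST : Disjoint S T) :
    eBtw G S T = ∑ v ∈ S, dS G v T := by
  have hh := SimpleGraph.sum_degrees_eq_twice_card_edges (btwGraph G S T)
  rw [← eBtw_eq_card] at hh
  have hsplit : ∑ v, (btwGraph G S T).degree v
      = ∑ v ∈ S, dS G v T + ∑ v ∈ T, dS G v S := by
    rw [← Finset.sum_subset (Finset.subset_univ (S ∪ T))
        (fun x _ hx => by
          simp only [Finset.mem_union, not_or] at hx
          simp [btwGraph_degree G S T hST, hx.1, hx.2]),
      Finset.sum_union hST]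
    congr 1
    · exact Finset.sum_congr rfl fun v hv => by simp [btwGraph_degree G S T hST, hv]
    · refine Finset.sum_congr rfl fun v hv => ?_
      have hv' : v ∉ S := Finset.disjoint_right.mp hST hv
      simp [btwGraph_degree G S T hST, hv, hv']
  rw [hsplit, dS_sum_comm] at hh
  rw [dS_sum_comm]
  omega
end helpers
section main
variable {V : Type*} [Fintype V] [DecidableEq V] (G : SimpleGraph V) [DecidableRel G.Adj]

lemma dS_le_degree (v : V) (S : Finset V) : dS G v S ≤ G.degree v := by
  rw [dS_eq_card, ← SimpleGraph.card_neighborFinset_eq_degree,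
    SimpleGraph.neighborFinset_eq_filter]
  exact Finset.card_le_card fun y hy => by
    simp only [Finset.mem_filter] at *; exact ⟨Finset.mem_univ y, hy.2⟩

lemma degree_split (U A B : Finset V) (hUA : Disjoint U A) (hUB : Disjoint U B)
    (hAB : Disjoint A B) (hcover : U ∪ A ∪ B = Finset.univ) (v : V) :
    G.degree v = dS G v U + dS G v A + dS G v B := by
  simp only [dS_eq_card]
  rw [← SimpleGraph.card_neighborFinset_eq_degree, SimpleGraph.neighborFinset_eq_filter,
    ← hcover, Finset.filter_union, Finset.filter_union,
    Finset.card_union_of_disjoint, Finset.card_union_of_disjoint]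
  · exact Finset.disjoint_filter_filter hUA
  · refine Finset.disjoint_union_left.mpr
      ⟨Finset.disjoint_filter_filter hUB, Finset.disjoint_filter_filter hAB⟩

end main

/-- If `char_{D/2,ε}(G) = (ℓ, m)` for a `D`-regular graph with partition `U, A, B`
and `|A| ≥ |B|`, then `ℓ, m ≥ 0` and `ℓ + m/2 ≥ |A| − |B|`. -/
theorem matching_sizes {V : Type*} [Fintype V] [DecidableEq V]
    (D : ℕ) (hD : 0 < D) (ε : ℝ) (hε0 : 0 < ε) (hε : ε < 1/3)
    (G : SimpleGraph V) (hreg : IsDRegular G D)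
    (U A B : Finset V)
    (hUA : Disjoint U A) (hUB : Disjoint U B) (hAB : Disjoint A B)
    (hcover : U ∪ A ∪ B = Finset.univ)
    (hsize : B.card ≤ A.card)
    (hdegA : ∀ v ∈ A, 2 * dS G v A ≤ D)
    (hdegAU1 : ∀ v ∈ A, 2 * dS G v U ≤ D)
    (hdegAU2 : ∀ v ∈ U, 2 * dS G v A ≤ D)
    (ℓ m : ℤ) (hchar : CharEq G ((D : ℝ) / 2) ε U A ℓ m) :
    0 ≤ ℓ ∧ 0 ≤ m ∧ (A.card : ℚ) - B.card ≤ (ℓ : ℚ) + (m : ℚ) / 2 := by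
  classical
  obtain ⟨hl, hme, hmle, hmmax⟩ := hchar
  set c : ℤ := ⌈(eBtw G A U : ℝ) / ((D:ℝ)/2) - ε⌉ with hc
  have hdeg : ∀ v, G.degree v = D := fun v => by rw [← pdeg_eq_degree]; exact hreg v
  -- counting
  have key : D * A.card = eBtw G A U + 2 * eIn G A + eBtw G A B := by
    have h1 : D * A.card = ∑ v ∈ A, G.degree v := by
      rw [Finset.sum_congr rfl fun v _ => hdeg v, Finset.sum_const, smul_eq_mul, mul_comm]
    rw [h1, Finset.sum_congr rfl fun v _ => degree_split G U A B hUA hUB hAB hcover v,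
      Finset.sum_add_distrib, Finset.sum_add_distrib,
      eBtw_eq_sum G A U hUA.symm, eBtw_eq_sum G A B hAB, twice_eIn]
  have hB : eBtw G A B ≤ D * B.card := by
    rw [eBtw_eq_sum G A B hAB, dS_sum_comm]
    calc ∑ v ∈ B, dS G v A ≤ ∑ v ∈ B, G.degree v :=
          Finset.sum_le_sum fun v _ => dS_le_degree G v A
      _ = D * B.card := by
          rw [Finset.sum_congr rfl fun v _ => hdeg v, Finset.sum_const, smul_eq_mul, mul_comm]
  have keyN : D * A.card ≤ eBtw G A U + 2 * eIn G A + D * B.card := by omega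
  -- real preliminaries
  have hDpos : (0:ℝ) < D := by exact_mod_cast hD
  have hD2 : (0:ℝ) < (D:ℝ)/2 := by linarith
  have e1 : ∀ a : ℝ, a / ((D:ℝ)/2) = 2 * a / D := fun a => by
    field_simp
  have h1 : (eIn G A : ℝ) / ((D:ℝ)/2) - ε ≤ (ℓ:ℝ) := hl ▸ Int.le_ceil _
  have h2 : (eBtw G A U : ℝ) / ((D:ℝ)/2) - ε ≤ (c:ℝ) := Int.le_ceil _
  -- ℓ ≥ 0
  have hl0 : 0 ≤ ℓ := by
    have : (-1 : ℤ) < ℓ := by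
      rw [hl]
      refine Int.lt_ceil.mpr ?_
      push_cast
      have : (0:ℝ) ≤ (eIn G A : ℝ) / ((D:ℝ)/2) := by positivity
      linarith
    omega
  -- c ≥ 0, m ≥ 0
  have hc0 : 0 ≤ c := by
    have : (-1 : ℤ) < c := by
      rw [hc]
      refine Int.lt_ceil.mpr ?_
      push_cast
      have : (0:ℝ) ≤ (eBtw G A U : ℝ) / ((D:ℝ)/2) := by positivity
      linarith
    omega
  have hm0 : 0 ≤ m := hmmax 0 Even.zero hc0
  -- m ≥ c - 1
  have hmc : c - 1 ≤ m := by
    have h2' := hmmax (2 * (c / 2)) ⟨c / 2, by ring⟩ (by omega)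
    omega
  refine ⟨hl0, hm0, ?_⟩
  -- main inequality
  rw [e1] at h1 h2
  have h1' : 2 * (eIn G A : ℝ) ≤ ((ℓ:ℝ) + ε) * D := by
    rw [← div_le_iff₀ hDpos]; linarith
  have h2' : 2 * (eBtw G A U : ℝ) ≤ ((c:ℝ) + ε) * D := by
    rw [← div_le_iff₀ hDpos]; linarith
  have hkeyR : (D:ℝ) * A.card ≤ (eBtw G A U : ℝ) + 2 * (eIn G A : ℝ) + (D:ℝ) * B.card := by
    exact_mod_cast keyN
  have hmcR : (c:ℝ) - 1 ≤ (m:ℝ) := by exact_mod_cast hmc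
  have hmul : (2 * (A.card:ℝ) - 2 * B.card) * D ≤ (2*(ℓ:ℝ) + (m:ℝ) + 1 + 3*ε) * D := by
    nlinarith
  have hreal : 2 * (A.card:ℝ) - 2 * B.card < 2*(ℓ:ℝ) + (m:ℝ) + 2 := by
    have := le_of_mul_le_mul_right hmul hDpos
    linarith
  have hint : 2 * (A.card:ℤ) - 2 * B.card < 2 * ℓ + m + 2 := by
    exact_mod_cast (show ((2 * (A.card:ℤ) - 2 * B.card : ℤ) : ℝ) < ((2 * ℓ + m + 2 : ℤ) : ℝ) by
      push_cast; linarith)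
  obtain ⟨t, ht⟩ := hme
  have hk : 2 * (A.card:ℤ) - 2 * B.card ≤ 2 * ℓ + m := by omega
  have hq : 2 * (A.card:ℚ) - 2 * B.card ≤ 2 * (ℓ:ℚ) + (m:ℚ) := by exact_mod_cast hk
  linarith
end
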